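/- arXiv:2304.10980 — 3 statements merged into one kernel-verified Lean document; each statement's English description precedes it below -/
import Mathlib

section
/- There is a constant c > 0 such that for all integers Q ≥ 1 and reals X with Q ≤ X, the cardinality of Γ₀(Q, X) = {A ∈ Γ₀(Q) : height of A ≤ X} is at least c · X² / (Q · log log (X + 3)). -/
open Finset

/-- primes ≤ N -/
def pr (N : ℕ) : Finset ℕ := (range (N+1)).filter Nat.Prime

lemma pr_pos {N p : ℕ} (hp : p ∈ pr N) : 0 < p := ((mem_filter.1 hp).2).pos

lemma pr_le {N p : ℕ} (hp : p ∈ pr N) : p ≤ N := by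
  have := (mem_filter.1 hp).1; rw [mem_range] at this; omega

lemma pr_prime {N p : ℕ} (hp : p ∈ pr N) : p.Prime := (mem_filter.1 hp).2

lemma theta_le (N : ℕ) : ∑ p ∈ pr N, Real.log p ≤ N * Real.log 4 := by
  have h1 : (primorial N : ℝ) ≤ ((4:ℝ) ^ N) := by
    have := primorial_le_4_pow N
    calc (primorial N : ℝ) ≤ ((4^N : ℕ) : ℝ) := by exact_mod_cast this
      _ = (4:ℝ)^N := by push_cast; ring
  have hpos : (0:ℝ) < primorial N := by
    have : 0 < primorial N := prod_pos fun p hp => ((mem_filter.1 hp).2).pos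
    exact_mod_cast this
  have h2 : Real.log (primorial N) ≤ Real.log ((4:ℝ)^N) := Real.log_le_log hpos h1
  rw [Real.log_pow] at h2
  have h3 : Real.log (primorial N) = ∑ p ∈ pr N, Real.log p := by
    show Real.log ((∏ p ∈ pr N, p : ℕ) : ℝ) = _
    rw [Nat.cast_prod, Real.log_prod]
    · intro p hp
      exact_mod_cast (pr_pos hp).ne'
  rw [h3] at h2
  exact_mod_cast h2

lemma prod_pow_le_factorial (N : ℕ) : ∏ p ∈ pr N, p ^ (N / p) ≤ Nat.factorial N := by
  by_cases hN : N = 0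
  · subst hN; simp [pr]
  have hfac : Nat.factorial N ≠ 0 := (Nat.factorial_pos N).ne'
  have hsub : pr N ⊆ (Nat.factorial N).primeFactors := by
    intro p hp
    rw [Nat.mem_primeFactors]
    exact ⟨pr_prime hp, (Nat.Prime.dvd_factorial (pr_prime hp)).2 (pr_le hp), hfac⟩
  calc ∏ p ∈ pr N, p ^ (N / p)
      ≤ ∏ p ∈ pr N, p ^ ((Nat.factorial N).factorization p) := by
        apply Finset.prod_le_prod'
        intro p hp
        apply Nat.pow_le_pow_right (pr_pos hp)
        -- N / p ≤ factorization p of N!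
        have hp' := pr_prime hp
        rw [← Nat.Prime.pow_dvd_iff_le_factorization hp' hfac]
        rw [Nat.Prime.pow_dvd_factorial_iff hp' (Nat.lt_succ_self _)]
        calc N / p = N / p ^ 1 := by rw [pow_one]
          _ ≤ ∑ i ∈ Finset.Ico 1 (Nat.log p N + 1), N / p ^ i := by
              by_cases hle : p ≤ N
              · apply Finset.single_le_sum (f := fun i => N / p ^ i)
                · intro i _; positivity
                · rw [Finset.mem_Ico]
                  refine ⟨le_refl _, ?_⟩
                  have : 1 ≤ Nat.log p N := Nat.log_pos hp'.one_lt hle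
                  omega
              · have : N / p = 0 := Nat.div_eq_of_lt (by omega)
                rw [pow_one, this]
                exact Nat.zero_le _
    _ ≤ ∏ p ∈ (Nat.factorial N).primeFactors, p ^ ((Nat.factorial N).factorization p) := by
        apply prod_le_prod_of_subset_of_one_le' hsub
        intro p hp _
        exact Nat.one_le_pow _ _ (Nat.pos_of_mem_primeFactors hp)
    _ = Nat.factorial N := Nat.factorization_prod_pow_eq_self hfac

lemma pr_def (N : ℕ) : pr N = (range (N+1)).filter Nat.Prime := rfl

lemma mertens1 (N : ℕ) (hN : 1 ≤ N) :
    ∑ p ∈ pr N, Real.log p / p ≤ Real.log N + Real.log 4 := by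
  have hNR : (0:ℝ) < N := by exact_mod_cast hN
  -- log of prod_pow_le_factorial
  have h1 : ∑ p ∈ pr N, ((N / p : ℕ) : ℝ) * Real.log p ≤ N * Real.log N := by
    have hf : (0:ℝ) < (Nat.factorial N : ℝ) := by exact_mod_cast Nat.factorial_pos N
    have hprod : ((∏ p ∈ pr N, p ^ (N / p) : ℕ) : ℝ) ≤ (Nat.factorial N : ℝ) := by
      exact_mod_cast prod_pow_le_factorial N
    have hppos : (0:ℝ) < ((∏ p ∈ pr N, p ^ (N / p) : ℕ) : ℝ) := by
      have : 0 < ∏ p ∈ pr N, p ^ (N / p) := prod_pos fun p hp => pow_pos (pr_pos hp) _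
      exact_mod_cast this
    have := Real.log_le_log hppos hprod
    have hlogprod : Real.log ((∏ p ∈ pr N, p ^ (N / p) : ℕ) : ℝ)
        = ∑ p ∈ pr N, ((N / p : ℕ) : ℝ) * Real.log p := by
      rw [Nat.cast_prod, Real.log_prod]
      · refine Finset.sum_congr rfl fun p hp => ?_
        push_cast
        rw [Real.log_pow]
      · intro p hp
        have := pr_pos hp
        positivity
    have hfle : (Nat.factorial N : ℝ) ≤ (N:ℝ) ^ N := by
      exact_mod_cast Nat.factorial_le_pow N
    have h2 := Real.log_le_log hf hfle
    rw [Real.log_pow] at h2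
    rw [hlogprod] at this
    linarith
  -- (N/p : ℕ) ≥ N/p - 1
  have h2 : ∀ p ∈ pr N, (N:ℝ)/p * Real.log p - Real.log p ≤ ((N / p : ℕ) : ℝ) * Real.log p := by
    intro p hp
    have hp2 := (pr_prime hp).two_le
    have hppos : (0:ℝ) < p := by exact_mod_cast pr_pos hp
    have hlogp : 0 ≤ Real.log p := Real.log_nonneg (by exact_mod_cast hp2.trans' (by norm_num))
    have : (N:ℝ)/p - 1 ≤ ((N / p : ℕ) : ℝ) := by
      have hlt := Nat.lt_mul_div_succ N (pr_pos hp)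
      have hcast : (N:ℝ) < p * ((N / p : ℕ) + 1) := by exact_mod_cast hlt
      rw [sub_le_iff_le_add, div_le_iff₀ hppos]
      nlinarith
    nlinarith
  have h3 : ∑ p ∈ pr N, ((N:ℝ)/p * Real.log p - Real.log p) ≤ N * Real.log N :=
    le_trans (Finset.sum_le_sum h2) h1
  rw [Finset.sum_sub_distrib] at h3
  have h4 := theta_le N
  have h5 : ∑ p ∈ pr N, (N:ℝ)/p * Real.log p ≤ N * Real.log N + N * Real.log 4 := by linarith
  have h6 : ∑ p ∈ pr N, (N:ℝ)/p * Real.log p = N * ∑ p ∈ pr N, Real.log p / p := by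
    rw [Finset.mul_sum]
    refine Finset.sum_congr rfl fun p hp => ?_
    field_simp
  rw [h6] at h5
  have := (mul_le_mul_iff_right₀ hNR).1 (by linarith : (N:ℝ) * ∑ p ∈ pr N, Real.log p / p ≤ N * (Real.log N + Real.log 4))
  exact this

lemma pr_succ (N : ℕ) : pr (N+1) = if (N+1).Prime then insert (N+1) (pr N) else pr N := by
  rw [pr_def, pr_def, range_add_one, filter_insert]

lemma key (N : ℕ) (hN : 2 ≤ N) (S : ℝ) (hS : S ≤ Real.log N + Real.log 4) :
    S/Real.log N - Real.log 4/Real.log N + Real.log (Real.log N)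
      ≤ S/Real.log (N+1) - Real.log 4/Real.log (N+1) + Real.log (Real.log (N+1)) := by
  set B := Real.log N with hBdef
  set A := Real.log ((N:ℝ)+1) with hAdef
  have hB : 0 < B := Real.log_pos (by exact_mod_cast hN)
  have h2N : (2:ℝ) ≤ (N:ℝ) := by exact_mod_cast hN
  have hA : 0 < A := Real.log_pos (by linarith)
  have hAB : B ≤ A := Real.log_le_log (by positivity) (by linarith)
  have hconc : (A - B)/A ≤ Real.log A - Real.log B := by
    have h1 : Real.log (B/A) ≤ B/A - 1 := Real.log_le_sub_one_of_pos (by positivity)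
    rw [Real.log_div hB.ne' hA.ne'] at h1
    have : (A-B)/A = 1 - B/A := by field_simp
    linarith
  have hmain : (S - Real.log 4) * (1/B - 1/A) ≤ Real.log A - Real.log B := by
    have hpos : 0 ≤ 1/B - 1/A := by
      rw [sub_nonneg]
      exact one_div_le_one_div_of_le hB hAB
    rcases le_or_gt (S - Real.log 4) 0 with h | h
    · calc (S - Real.log 4) * (1/B - 1/A) ≤ 0 := mul_nonpos_of_nonpos_of_nonneg h hpos
        _ ≤ (A-B)/A := div_nonneg (by linarith) hA.le
        _ ≤ _ := hconc
    · have hSB : S - Real.log 4 ≤ B := by linarith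
      calc (S - Real.log 4) * (1/B - 1/A) ≤ B * (1/B - 1/A) := by
            exact mul_le_mul_of_nonneg_right hSB hpos
        _ = (A - B)/A := by field_simp
        _ ≤ _ := hconc
  have hexp : S/B - Real.log 4/B - (S/A - Real.log 4/A) = (S - Real.log 4) * (1/B - 1/A) := by
    field_simp
  have : Real.log ((N:ℝ)+1) = Real.log (((N:ℕ)+1 : ℕ) : ℝ) := by push_cast; ring_nf
  linarith [hmain, hexp.le, hexp.ge]

lemma mertens2 (N : ℕ) (hN : 2 ≤ N) :
    ∑ p ∈ pr N, 1/(p:ℝ) ≤ (∑ p ∈ pr N, Real.log p / p)/Real.log N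
      - Real.log 4/Real.log N + Real.log (Real.log N) + (2 - Real.log (Real.log 2)) := by
  induction N, hN using Nat.le_induction with
  | base =>
    have h2 : pr 2 = {2} := by
      rw [pr_def]
      decide
    rw [h2]
    simp only [sum_singleton]
    have hlog2 : Real.log 2 ≠ 0 := (Real.log_pos (by norm_num)).ne'
    have hlog4 : Real.log 4 = 2 * Real.log 2 := by
      rw [show (4:ℝ) = 2^2 by norm_num, Real.log_pow]; push_cast; ring
    push_cast
    have heq : Real.log 2 / 2 / Real.log 2 - Real.log 4 / Real.log 2 + Real.log (Real.log 2) + (2 - Real.log (Real.log 2)) = 1/2 := by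
      rw [hlog4]
      field_simp
      ring
    rw [heq]
  | succ N hN ih =>
    have hkey := key N hN (∑ p ∈ pr N, Real.log p / p) (mertens1 N (by omega))
    rw [pr_succ N]
    split_ifs with hp
    · have hnotmem : (N+1) ∉ pr N := by
        intro h
        rw [pr_def, mem_filter, mem_range] at h
        omega
      rw [sum_insert hnotmem, sum_insert hnotmem]
      have hA : Real.log ((N:ℝ)+1) ≠ 0 := by
        have : (1:ℝ) < (N:ℝ)+1 := by
          have : (2:ℝ) ≤ N := by exact_mod_cast hN
          linarith
        exact (Real.log_pos this).ne'
      have hcast : ((N+1 : ℕ) : ℝ) = (N:ℝ)+1 := by push_cast; ring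
      rw [hcast]
      have hexpand : (Real.log ((N:ℝ)+1) / ((N:ℝ)+1) + ∑ p ∈ pr N, Real.log p / p) / Real.log ((N:ℝ)+1)
          = 1/((N:ℝ)+1) + (∑ p ∈ pr N, Real.log p / p) / Real.log ((N:ℝ)+1) := by
        field_simp
      rw [hexpand]
      have hN1 : (0:ℝ) < (N:ℝ)+1 := by positivity
      linarith
    · have hcast : ((N+1 : ℕ) : ℝ) = (N:ℝ)+1 := by push_cast; ring
      rw [hcast] at *
      linarith

lemma log_two_half : (0.6931471803 : ℝ) ≤ Real.log 2 := Real.log_two_gt_d9.le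

lemma mertens3 (N : ℕ) (hN : 2 ≤ N) :
    ∑ p ∈ pr N, 1/(p:ℝ) ≤ Real.log (Real.log N) + 6 := by
  have h1 := mertens2 N hN
  have h2 := mertens1 N (by omega)
  have hB : 0 < Real.log N := Real.log_pos (by exact_mod_cast hN)
  have hlog4 : 0 ≤ Real.log 4 := Real.log_nonneg (by norm_num)
  have h3 : (∑ p ∈ pr N, Real.log p / p)/Real.log N - Real.log 4/Real.log N ≤ 1 := by
    rw [div_sub_div_same, div_le_one hB]
    linarith
  have hD : Real.log (Real.log 2) ≥ -1 := by
    have h12 : Real.log (1/2 : ℝ) ≤ Real.log (Real.log 2) :=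
      Real.log_le_log (by norm_num) (by linarith [log_two_half])
    have heq : Real.log (1/2 : ℝ) = - Real.log 2 := by
      rw [one_div, Real.log_inv]
    have hl2 : Real.log 2 ≤ 1 := by
      have := Real.log_le_sub_one_of_pos (by norm_num : (0:ℝ) < 2)
      linarith
    linarith
  linarith

/-- Sum over the distinct prime factors of n of 1/p, for n ≥ 8. -/
lemma primefactor_sum (n : ℕ) (hn : 8 ≤ n) :
    ∑ p ∈ n.primeFactors, 1/(p:ℝ) ≤ Real.log (Real.log (Real.log n)) + 8 := by
  set K := ⌊Real.log n⌋₊ with hK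
  have hn0 : (0:ℝ) < n := by positivity
  have hn8 : (8:ℝ) ≤ n := by exact_mod_cast hn
  have hlogn : (2:ℝ) < Real.log n := by
    have h88 : Real.log 8 ≤ Real.log n := Real.log_le_log (by norm_num) hn8
    have h8 : Real.log 8 = 3 * Real.log 2 := by
      rw [show (8:ℝ) = 2^3 by norm_num, Real.log_pow]; push_cast; ring
    nlinarith [log_two_half]
  have hK2 : 2 ≤ K := Nat.le_floor (by linarith : (2:ℝ) ≤ Real.log n)
  have hsmall : ∑ p ∈ n.primeFactors.filter (· ≤ K), 1/(p:ℝ)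
      ≤ Real.log (Real.log (Real.log n)) + 6 := by
    have hsub : n.primeFactors.filter (· ≤ K) ⊆ pr K := by
      intro p hp
      rw [mem_filter] at hp
      rw [pr_def, mem_filter, mem_range]
      exact ⟨by omega, Nat.prime_of_mem_primeFactors hp.1⟩
    have hmono : Real.log (Real.log K) ≤ Real.log (Real.log (Real.log n)) := by
      have h1 : (K:ℝ) ≤ Real.log n := Nat.floor_le (by linarith)
      have hKpos : (1:ℝ) < (K:ℝ) := by
        have : (2:ℝ) ≤ (K:ℝ) := by exact_mod_cast hK2
        linarith
      have h2 : Real.log K ≤ Real.log (Real.log n) := Real.log_le_log (by linarith) h1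
      exact Real.log_le_log (Real.log_pos hKpos) h2
    calc ∑ p ∈ n.primeFactors.filter (· ≤ K), 1/(p:ℝ)
        ≤ ∑ p ∈ pr K, 1/(p:ℝ) := by
          apply sum_le_sum_of_subset_of_nonneg hsub
          intro p _ _; positivity
      _ ≤ Real.log (Real.log K) + 6 := mertens3 K hK2
      _ ≤ _ := by linarith
  have hcard : (n.primeFactors.card : ℝ) * Real.log 2 ≤ Real.log n := by
    have hpow : (2:ℕ) ^ n.primeFactors.card ≤ n := by
      calc (2:ℕ) ^ n.primeFactors.card ≤ ∏ p ∈ n.primeFactors, p := by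
            apply Finset.pow_card_le_prod
            intro p hp
            exact (Nat.prime_of_mem_primeFactors hp).two_le
        _ ≤ n := Nat.le_of_dvd (by omega) (Nat.prod_primeFactors_dvd n)
    have : Real.log ((2:ℝ) ^ n.primeFactors.card) ≤ Real.log n := by
      apply Real.log_le_log (by positivity)
      exact_mod_cast hpow
    rwa [Real.log_pow] at this
  have hlarge : ∑ p ∈ n.primeFactors.filter (fun p => ¬ p ≤ K), 1/(p:ℝ) ≤ 2 := by
    have hbound : ∀ p ∈ n.primeFactors.filter (fun p => ¬ p ≤ K), 1/(p:ℝ) ≤ 1/Real.log n := by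
      intro p hp
      rw [mem_filter] at hp
      have hpK : K < p := by omega
      have : Real.log n < (p:ℝ) := by
        calc Real.log n < (K:ℝ) + 1 := Nat.lt_floor_add_one _
          _ ≤ (p:ℝ) := by exact_mod_cast hpK
      apply one_div_le_one_div_of_le (by linarith) this.le
    calc ∑ p ∈ n.primeFactors.filter (fun p => ¬ p ≤ K), 1/(p:ℝ)
        ≤ (n.primeFactors.filter (fun p => ¬ p ≤ K)).card * (1/Real.log n) := by
          have := Finset.sum_le_card_nsmul _ _ _ hbound
          rwa [nsmul_eq_mul] at this
      _ ≤ (n.primeFactors.card : ℝ) * (1/Real.log n) := by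
          apply mul_le_mul_of_nonneg_right _ (by positivity)
          exact_mod_cast Finset.card_le_card (filter_subset _ _)
      _ ≤ (Real.log n / Real.log 2) * (1/Real.log n) := by
          apply mul_le_mul_of_nonneg_right _ (by positivity)
          rw [le_div_iff₀ (by linarith [log_two_half] : (0:ℝ) < Real.log 2)]
          exact hcard
      _ = 1/Real.log 2 := by field_simp
      _ ≤ 2 := by
          rw [div_le_iff₀ (by linarith [log_two_half] : (0:ℝ) < Real.log 2)]
          linarith [log_two_half]
  calc ∑ p ∈ n.primeFactors, 1/(p:ℝ)
      = ∑ p ∈ n.primeFactors.filter (· ≤ K), 1/(p:ℝ)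
        + ∑ p ∈ n.primeFactors.filter (fun p => ¬ p ≤ K), 1/(p:ℝ) := by
        rw [← sum_filter_add_sum_filter_not n.primeFactors (· ≤ K)]
    _ ≤ _ := by linarith

lemma sq_sum_telescope : ∀ M : ℕ, 1 ≤ M → ∑ k ∈ Icc 2 M, (1:ℝ)/(k:ℝ)^2 ≤ 1 - 1/M := by
  intro M
  induction M with
  | zero => omega
  | succ M ih =>
    intro _
    rcases Nat.eq_or_lt_of_le (by omega : 1 ≤ M + 1) with h | h
    · rw [show M = 0 by omega]
      norm_num
    have hM : 1 ≤ M := by omega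
    have hins : Icc 2 (M+1) = insert (M+1) (Icc 2 M) := by
      ext x; simp only [mem_Icc, mem_insert]; omega
    rw [hins, sum_insert (by simp)]
    have h1 : (0:ℝ) < M := by exact_mod_cast hM
    have h2 : (1:ℝ)/((M:ℝ)+1)^2 ≤ 1/M - 1/(M+1) := by
      rw [div_sub_div _ _ (by positivity) (by positivity), div_le_div_iff₀ (by positivity) (by positivity)]
      nlinarith
    have := ih hM
    push_cast
    push_cast at this h2
    linarith

lemma prime_sq_sum (n : ℕ) (hn : 1 ≤ n) : ∑ p ∈ n.primeFactors, (1:ℝ)/(p:ℝ)^2 ≤ 1 := by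
  have hsub : n.primeFactors ⊆ Icc 2 n := by
    intro p hp
    rw [mem_Icc]
    exact ⟨(Nat.prime_of_mem_primeFactors hp).two_le,
      Nat.le_of_dvd (by omega) (Nat.dvd_of_mem_primeFactors hp)⟩
  calc ∑ p ∈ n.primeFactors, (1:ℝ)/(p:ℝ)^2
      ≤ ∑ k ∈ Icc 2 n, (1:ℝ)/(k:ℝ)^2 := by
        apply sum_le_sum_of_subset_of_nonneg hsub
        intro k _ _; positivity
    _ ≤ 1 - 1/n := sq_sum_telescope n hn
    _ ≤ 1 := by
        have : (0:ℝ) < n := by exact_mod_cast hn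
        have : 0 ≤ 1/(n:ℝ) := by positivity
        linarith

lemma one_sub_ge_exp (x : ℝ) (hx0 : 0 < x) (hx : x ≤ 1/2) :
    Real.exp (-(x + 2*x^2)) ≤ 1 - x := by
  have h1x : 0 < 1 - x := by linarith
  have h1 : Real.log (1/(1-x)) ≤ 1/(1-x) - 1 := Real.log_le_sub_one_of_pos (by positivity)
  rw [one_div, Real.log_inv] at h1
  have h2 : 1/(1-x) - 1 = x/(1-x) := by field_simp; ring
  have h3 : x/(1-x) ≤ x + 2*x^2 := by
    rw [div_le_iff₀ h1x]
    nlinarith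
  have h4 : -(x + 2*x^2) ≤ Real.log (1-x) := by
    rw [one_div] at h2
    linarith
  calc Real.exp (-(x + 2*x^2)) ≤ Real.exp (Real.log (1-x)) := Real.exp_le_exp.2 h4
    _ = 1 - x := Real.exp_log h1x

lemma totient_ratio (n : ℕ) (hn : 1 ≤ n) :
    Real.exp (-(∑ p ∈ n.primeFactors, 1/(p:ℝ)) - 2) * n ≤ (Nat.totient n : ℝ) := by
  have hformula : (Nat.totient n : ℝ) = n * ∏ p ∈ n.primeFactors, (1 - (p:ℝ)⁻¹) := by
    have := Nat.totient_eq_mul_prod_factors n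
    have h2 : ((Nat.totient n : ℚ) : ℝ) = ((n : ℚ) : ℝ) * ((∏ p ∈ n.primeFactors, (1 - (p:ℚ)⁻¹) : ℚ) : ℝ) := by
      exact_mod_cast congrArg (fun q : ℚ => (q : ℝ)) this
    push_cast at h2 ⊢
    exact h2
  rw [hformula]
  have hprod : Real.exp (-(∑ p ∈ n.primeFactors, 1/(p:ℝ)) - 2)
      ≤ ∏ p ∈ n.primeFactors, (1 - (p:ℝ)⁻¹) := by
    have hstep : ∏ p ∈ n.primeFactors, Real.exp (-(1/(p:ℝ) + 2*(1/(p:ℝ))^2))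
        ≤ ∏ p ∈ n.primeFactors, (1 - (p:ℝ)⁻¹) := by
      apply Finset.prod_le_prod
      · intro p _; positivity
      · intro p hp
        have hp2 := (Nat.prime_of_mem_primeFactors hp).two_le
        have hppos : (0:ℝ) < p := by exact_mod_cast (by omega : 0 < p)
        have := one_sub_ge_exp (1/(p:ℝ)) (by positivity)
          (by rw [div_le_div_iff₀ hppos (by norm_num)]; exact_mod_cast by omega)
        rw [one_div] at this ⊢
        exact this
    rw [← Real.exp_sum] at hstep
    refine le_trans (Real.exp_le_exp.2 ?_) hstep
    have hsq := prime_sq_sum n hn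
    have hexpand : ∑ p ∈ n.primeFactors, -(1/(p:ℝ) + 2*(1/(p:ℝ))^2)
        = (∑ p ∈ n.primeFactors, -(1/(p:ℝ))) + ∑ p ∈ n.primeFactors, (-2)*((1:ℝ)/(p:ℝ)^2) := by
      rw [← sum_add_distrib]
      refine sum_congr rfl fun p hp => ?_
      have hp0 : (0:ℝ) < p := by
        exact_mod_cast (Nat.prime_of_mem_primeFactors hp).pos
      field_simp
      ring
    have hneg : (∑ p ∈ n.primeFactors, -(1/(p:ℝ))) = -∑ p ∈ n.primeFactors, 1/(p:ℝ) := by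
      rw [← Finset.sum_neg_distrib]
    have hmul : ∑ p ∈ n.primeFactors, (-2)*((1:ℝ)/(p:ℝ)^2)
        = (-2) * ∑ p ∈ n.primeFactors, (1:ℝ)/(p:ℝ)^2 := by
      rw [Finset.mul_sum]
    rw [hexpand, hneg, hmul]
    linarith
  calc Real.exp (-(∑ p ∈ n.primeFactors, 1/(p:ℝ)) - 2) * n
      ≤ (∏ p ∈ n.primeFactors, (1 - (p:ℝ)⁻¹)) * n := by
        apply mul_le_mul_of_nonneg_right hprod (by positivity)
    _ = n * ∏ p ∈ n.primeFactors, (1 - (p:ℝ)⁻¹) := by ring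

lemma loglog4_lb : (1/6 : ℝ) ≤ Real.log (Real.log 4) := by
  have hl2 : (0.6931471803:ℝ) ≤ Real.log 2 := Real.log_two_gt_d9.le
  have hlog4 : Real.log 4 = 2 * Real.log 2 := by
    rw [show (4:ℝ) = 2^2 by norm_num, Real.log_pow]; push_cast; ring
  have h4 : (1.38:ℝ) ≤ Real.log 4 := by rw [hlog4]; linarith
  have hx : (0:ℝ) < Real.log 4 := by linarith
  have hlb : 1 - 1/Real.log 4 ≤ Real.log (Real.log 4) := by
    have h1 : Real.log (1/Real.log 4) ≤ 1/Real.log 4 - 1 :=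
      Real.log_le_sub_one_of_pos (by positivity)
    rw [one_div, Real.log_inv] at h1
    rw [one_div]
    linarith
  have : (1/6:ℝ) ≤ 1 - 1/Real.log 4 := by
    rw [div_le_iff₀ (by norm_num : (0:ℝ) < 6)] at *
    have : 1/Real.log 4 ≤ 1/(1.38:ℝ) := one_div_le_one_div_of_le (by norm_num) h4
    have h138 : (1:ℝ)/(1.38:ℝ) ≤ 0.725 := by norm_num
    linarith
  linarith

lemma loglog_mono {a b : ℝ} (ha : 4 ≤ a) (hab : a ≤ b) :
    Real.log (Real.log a) ≤ Real.log (Real.log b) := by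
  have h1 : (1.38:ℝ) ≤ Real.log a := by
    have hl2 : (0.6931471803:ℝ) ≤ Real.log 2 := Real.log_two_gt_d9.le
    have hlog4 : Real.log 4 = 2 * Real.log 2 := by
      rw [show (4:ℝ) = 2^2 by norm_num, Real.log_pow]; push_cast; ring
    have := Real.log_le_log (by norm_num : (0:ℝ) < 4) ha
    rw [hlog4] at this
    linarith
  exact Real.log_le_log (by linarith) (Real.log_le_log (by linarith) hab)

lemma loglog4_pos : (0:ℝ) < Real.log (Real.log 4) := lt_of_lt_of_le (by norm_num) loglog4_lb

lemma totient_lower (n : ℕ) (hn : 1 ≤ n) :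
    Real.exp (-11) * n / Real.log (Real.log ((n:ℝ)+3)) ≤ (Nat.totient n : ℝ) := by
  have hll_pos : (0:ℝ) < Real.log (Real.log ((n:ℝ)+3)) := by
    have : Real.log (Real.log 4) ≤ Real.log (Real.log ((n:ℝ)+3)) := by
      apply loglog_mono le_rfl
      have : (1:ℝ) ≤ n := by exact_mod_cast hn
      linarith
    linarith [loglog4_pos]
  rcases le_or_gt 8 n with h8 | h8
  · -- large n
    have hsum := primefactor_sum n h8
    have hratio := totient_ratio n hn
    set L := Real.log (Real.log (Real.log (n:ℝ))) with hL
    have hstep : Real.exp (-(L + 8) - 2) * n ≤ (Nat.totient n : ℝ) := by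
      refine le_trans (mul_le_mul_of_nonneg_right (Real.exp_le_exp.2 ?_) (by positivity)) hratio
      linarith
    have hloglogpos : (0:ℝ) < Real.log (Real.log (n:ℝ)) := by
      have hn8 : (8:ℝ) ≤ n := by exact_mod_cast h8
      have hl2 : (0.6931471803:ℝ) ≤ Real.log 2 := Real.log_two_gt_d9.le
      have h8' : Real.log 8 = 3 * Real.log 2 := by
        rw [show (8:ℝ) = 2^3 by norm_num, Real.log_pow]; push_cast; ring
      have hlogn : (2:ℝ) ≤ Real.log n := by
        have := Real.log_le_log (by norm_num : (0:ℝ) < 8) hn8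
        rw [h8'] at this
        linarith
      have := Real.log_le_log (by norm_num : (0:ℝ) < 2) hlogn
      have hl2' : (0:ℝ) < Real.log 2 := by linarith
      linarith
    have hexp : Real.exp (-(L + 8) - 2) = Real.exp (-10) / Real.log (Real.log (n:ℝ)) := by
      rw [show -(L + 8) - 2 = -L + (-10) by ring, Real.exp_add, hL, Real.exp_neg,
        Real.exp_log hloglogpos]
      ring
    rw [hexp] at hstep
    have hmono : Real.log (Real.log ((n:ℝ))) ≤ Real.log (Real.log ((n:ℝ)+3)) := by
      apply loglog_mono _ (by linarith)
      have : (8:ℝ) ≤ n := by exact_mod_cast h8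
      linarith
    have hexp1011 : Real.exp (-11) ≤ Real.exp (-10) := Real.exp_le_exp.2 (by norm_num)
    calc Real.exp (-11) * n / Real.log (Real.log ((n:ℝ)+3))
        ≤ Real.exp (-10) * n / Real.log (Real.log ((n:ℝ))) := by
          apply div_le_div₀ (by positivity) _ hloglogpos hmono
          apply mul_le_mul_of_nonneg_right hexp1011 (by positivity)
      _ = Real.exp (-10) / Real.log (Real.log ((n:ℝ))) * n := by ring
      _ ≤ _ := hstep
  · -- small n : φ n ≥ 1
    have hφ : (1:ℝ) ≤ (Nat.totient n : ℝ) := by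
      exact_mod_cast Nat.totient_pos.2 (by omega)
    have hexp11 : Real.exp (-11) ≤ 1/42 := by
      have h55 : (6.5:ℝ) ≤ Real.exp 5.5 := by
        have := Real.add_one_le_exp (5.5:ℝ)
        linarith
      have : (42:ℝ) ≤ Real.exp 11 := by
        have : Real.exp 11 = Real.exp 5.5 * Real.exp 5.5 := by
          rw [← Real.exp_add]; norm_num
        nlinarith
      rw [Real.exp_neg]
      rw [inv_le_comm₀ (by positivity) (by norm_num)] -- maybe wrong name
      linarith
    have hn7 : (n:ℝ) ≤ 7 := by exact_mod_cast (by omega : n ≤ 7)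
    have hll : (1/6:ℝ) ≤ Real.log (Real.log ((n:ℝ)+3)) := by
      refine le_trans loglog4_lb (loglog_mono le_rfl ?_)
      have : (1:ℝ) ≤ n := by exact_mod_cast hn
      linarith
    rw [div_le_iff₀ hll_pos]
    calc Real.exp (-11) * n ≤ (1/42) * 7 := by
          apply mul_le_mul hexp11 hn7 (by positivity) (by norm_num)
      _ = 1/6 := by norm_num
      _ ≤ Real.log (Real.log ((n:ℝ)+3)) := hll
      _ ≤ 1 * Real.log (Real.log ((n:ℝ)+3)) := by linarith
      _ ≤ (Nat.totient n : ℝ) * Real.log (Real.log ((n:ℝ)+3)) := by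
          apply mul_le_mul_of_nonneg_right hφ hll_pos.le

lemma totient_Icc (n : ℕ) (hn : 1 ≤ n) :
    ((Icc 1 n).filter (fun a => Nat.Coprime a n)).card = Nat.totient n := by
  rcases Nat.eq_or_lt_of_le hn with h | h
  · rw [← h]
    decide
  have h2 : 2 ≤ n := h
  rw [Nat.totient_eq_card_coprime]
  congr 1
  ext a
  simp only [mem_filter, mem_Icc, mem_range]
  unfold Nat.Coprime
  constructor
  · rintro ⟨⟨h1a, han⟩, hcop⟩
    have hne : a ≠ n := by
      rintro rfl
      rw [Nat.gcd_self] at hcop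
      omega
    exact ⟨by omega, by rw [Nat.gcd_comm]; exact hcop⟩
  · rintro ⟨hlt, hcop⟩
    rw [Nat.gcd_comm] at hcop
    have : a ≠ 0 := by
      rintro rfl
      rw [Nat.gcd_zero_left] at hcop
      omega
    exact ⟨⟨by omega, by omega⟩, hcop⟩

lemma sq_sum_telescope3 : ∀ M : ℕ, 2 ≤ M → ∑ k ∈ Icc 3 M, (1:ℝ)/(k:ℝ)^2 ≤ 1/2 - 1/M := by
  intro M
  induction M with
  | zero => omega
  | succ M ih =>
    intro h
    rcases Nat.eq_or_lt_of_le h with h' | h'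
    · have : M = 1 := by omega
      subst this
      norm_num
    have hM : 2 ≤ M := by omega
    have hins : Icc 3 (M+1) = insert (M+1) (Icc 3 M) := by
      ext x; simp only [mem_Icc, mem_insert]; omega
    rw [hins, sum_insert (by simp)]
    have h1 : (0:ℝ) < M := by exact_mod_cast (by omega : 0 < M)
    have h2 : (1:ℝ)/((M:ℝ)+1)^2 ≤ 1/M - 1/(M+1) := by
      rw [div_sub_div _ _ (by positivity) (by positivity),
        div_le_div_iff₀ (by positivity) (by positivity)]
      nlinarith
    have := ih hM
    push_cast
    push_cast at this h2
    linarith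

lemma sq_sum_quarter (M : ℕ) : ∑ k ∈ Icc 2 M, (1:ℝ)/(k:ℝ)^2 ≤ 3/4 := by
  rcases le_or_gt 2 M with h | h
  · have hins : Icc 2 M = insert 2 (Icc 3 M) := by
      ext x; simp only [mem_Icc, mem_insert]; omega
    rw [hins, sum_insert (by simp)]
    have h3 := sq_sum_telescope3 M h
    have hMpos : (0:ℝ) < M := by exact_mod_cast (by omega : 0 < M)
    have h5 : (0:ℝ) < ((M:ℝ))⁻¹ := inv_pos.2 hMpos
    simp only [one_div] at h3 ⊢
    norm_num
    linarith
  · interval_cases M <;> norm_num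

lemma dvd_filter_card (M d : ℕ) : ((Icc 1 M).filter (fun x => d ∣ x)).card = M / d := by
  have : Icc 1 M = Ioc 0 M := by ext x; simp [mem_Icc, mem_Ioc]; omega
  rw [this]
  exact Nat.Ioc_filter_dvd_card_eq_div M d

lemma good_pairs_lb (M : ℕ) (hM : 1 ≤ M) :
    (M:ℝ)^2/4 ≤ (((Icc 1 M ×ˢ Icc 1 M).filter (fun q => Nat.gcd q.1 q.2 = 1)).card : ℝ) := by
  set P := Icc 1 M ×ˢ Icc 1 M with hP
  have hPcard : P.card = M * M := by
    rw [hP, card_product, Nat.card_Icc]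
    simp
  have hsplit : (P.filter (fun q => Nat.gcd q.1 q.2 = 1)).card
      + (P.filter (fun q => ¬ Nat.gcd q.1 q.2 = 1)).card = M * M := by
    rw [card_filter_add_card_filter_not]
    exact hPcard
  -- bad pairs
  have hbadsub : P.filter (fun q => ¬ Nat.gcd q.1 q.2 = 1)
      ⊆ (Icc 2 M).biUnion (fun d => ((Icc 1 M).filter (fun x => d ∣ x)) ×ˢ ((Icc 1 M).filter (fun x => d ∣ x))) := by
    intro q hq
    rw [mem_filter, hP, mem_product, mem_Icc, mem_Icc] at hq
    obtain ⟨⟨⟨ha1, haM⟩, ⟨hb1, hbM⟩⟩, hg⟩ := hq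
    set g := Nat.gcd q.1 q.2 with hgdef
    have hgpos : 0 < g := Nat.gcd_pos_of_pos_left q.2 (show 0 < q.1 by omega)
    have hg2 : 2 ≤ g := by
      rcases Nat.lt_or_ge g 2 with h | h
      · interval_cases g <;> simp_all
      · exact h
    have hgM : g ≤ M := le_trans (Nat.le_of_dvd (by omega) (Nat.gcd_dvd_left _ _)) haM
    rw [mem_biUnion]
    refine ⟨g, by rw [mem_Icc]; omega, ?_⟩
    rw [mem_product, mem_filter, mem_filter, mem_Icc, mem_Icc]
    exact ⟨⟨⟨ha1, haM⟩, Nat.gcd_dvd_left _ _⟩, ⟨⟨hb1, hbM⟩, Nat.gcd_dvd_right _ _⟩⟩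
  have hbad : ((P.filter (fun q => ¬ Nat.gcd q.1 q.2 = 1)).card : ℝ) ≤ 3/4 * (M:ℝ)^2 := by
    have h1 : (P.filter (fun q => ¬ Nat.gcd q.1 q.2 = 1)).card
        ≤ ∑ d ∈ Icc 2 M, (M / d) * (M / d) := by
      calc (P.filter (fun q => ¬ Nat.gcd q.1 q.2 = 1)).card
          ≤ ((Icc 2 M).biUnion (fun d => ((Icc 1 M).filter (fun x => d ∣ x)) ×ˢ ((Icc 1 M).filter (fun x => d ∣ x)))).card :=
            card_le_card hbadsub
        _ ≤ ∑ d ∈ Icc 2 M, (((Icc 1 M).filter (fun x => d ∣ x)) ×ˢ ((Icc 1 M).filter (fun x => d ∣ x))).card :=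
            card_biUnion_le
        _ = ∑ d ∈ Icc 2 M, (M / d) * (M / d) := by
            refine sum_congr rfl fun d _ => ?_
            rw [card_product, dvd_filter_card]
    have h2 : (∑ d ∈ Icc 2 M, ((M / d) * (M / d) : ℕ) : ℝ) ≤ 3/4 * (M:ℝ)^2 := by
      push_cast
      have hterm : ∀ d ∈ Icc 2 M, ((M / d : ℕ) : ℝ) * ((M / d : ℕ) : ℝ) ≤ (M:ℝ)^2 * (1/(d:ℝ)^2) := by
        intro d hd
        rw [mem_Icc] at hd
        have hd0 : (0:ℝ) < d := by exact_mod_cast (by omega : 0 < d)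
        have hdiv : ((M / d : ℕ) : ℝ) ≤ (M:ℝ)/d := by
          rw [le_div_iff₀ hd0]
          exact_mod_cast Nat.div_mul_le_self M d
        have h0 : (0:ℝ) ≤ ((M / d : ℕ) : ℝ) := by positivity
        have : ((M / d : ℕ) : ℝ) * ((M / d : ℕ) : ℝ) ≤ ((M:ℝ)/d) * ((M:ℝ)/d) := by
          apply mul_le_mul hdiv hdiv h0 (by positivity)
        calc ((M / d : ℕ) : ℝ) * ((M / d : ℕ) : ℝ) ≤ ((M:ℝ)/d) * ((M:ℝ)/d) := this
          _ = (M:ℝ)^2 * (1/(d:ℝ)^2) := by field_simp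
      calc ∑ d ∈ Icc 2 M, ((M / d : ℕ) : ℝ) * ((M / d : ℕ) : ℝ)
          ≤ ∑ d ∈ Icc 2 M, (M:ℝ)^2 * (1/(d:ℝ)^2) := sum_le_sum hterm
        _ = (M:ℝ)^2 * ∑ d ∈ Icc 2 M, (1:ℝ)/(d:ℝ)^2 := by rw [mul_sum]
        _ ≤ (M:ℝ)^2 * (3/4) := by
            apply mul_le_mul_of_nonneg_left (sq_sum_quarter M) (by positivity)
        _ = 3/4 * (M:ℝ)^2 := by ring
    calc ((P.filter (fun q => ¬ Nat.gcd q.1 q.2 = 1)).card : ℝ)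
        ≤ (∑ d ∈ Icc 2 M, ((M / d) * (M / d) : ℕ) : ℝ) := by exact_mod_cast h1
      _ ≤ 3/4 * (M:ℝ)^2 := h2
  have hcast : ((P.filter (fun q => Nat.gcd q.1 q.2 = 1)).card : ℝ)
      + ((P.filter (fun q => ¬ Nat.gcd q.1 q.2 = 1)).card : ℝ) = (M:ℝ) * (M:ℝ) := by
    exact_mod_cast congrArg (fun k : ℕ => (k:ℝ)) hsplit
  nlinarith [hbad, hcast]

lemma sum_totient_lb (M : ℕ) (hM : 1 ≤ M) :
    (M:ℝ)^2/8 ≤ ∑ m ∈ Icc 1 M, (Nat.totient m : ℝ) := by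
  set G := (Icc 1 M ×ˢ Icc 1 M).filter (fun q => Nat.gcd q.1 q.2 = 1) with hG
  set T := (Icc 1 M).sigma (fun b => (Icc 1 b).filter (fun a => Nat.Coprime a b)) with hT
  have hTcard : T.card = ∑ m ∈ Icc 1 M, Nat.totient m := by
    rw [hT, card_sigma]
    refine sum_congr rfl fun b hb => ?_
    rw [mem_Icc] at hb
    exact totient_Icc b hb.1
  have hinj1 : (G.filter (fun q => q.1 ≤ q.2)).card ≤ T.card := by
    apply card_le_card_of_injOn (fun q => (⟨q.2, q.1⟩ : Σ _ : ℕ, ℕ))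
    · intro q hq
      rw [Finset.mem_coe, mem_filter, hG, mem_filter, mem_product, mem_Icc, mem_Icc] at hq
      obtain ⟨⟨⟨⟨h11, h12⟩, ⟨h21, h22⟩⟩, hg⟩, hle⟩ := hq
      simp only [Finset.mem_coe, hT, mem_sigma, mem_filter, mem_Icc]
      exact ⟨⟨h21, h22⟩, ⟨h11, hle⟩, hg⟩
    · intro q _ r _ h
      obtain ⟨h1, h2⟩ := Sigma.mk.inj_iff.1 h
      exact Prod.ext (eq_of_heq h2) h1
  have hinj2 : (G.filter (fun q => ¬ q.1 ≤ q.2)).card ≤ T.card := by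
    apply card_le_card_of_injOn (fun q => (⟨q.1, q.2⟩ : Σ _ : ℕ, ℕ))
    · intro q hq
      rw [Finset.mem_coe, mem_filter, hG, mem_filter, mem_product, mem_Icc, mem_Icc] at hq
      obtain ⟨⟨⟨⟨h11, h12⟩, ⟨h21, h22⟩⟩, hg⟩, hle⟩ := hq
      simp only [Finset.mem_coe, hT, mem_sigma, mem_filter, mem_Icc]
      refine ⟨⟨h11, h12⟩, ⟨h21, by omega⟩, ?_⟩
      unfold Nat.Coprime
      rw [Nat.gcd_comm]
      exact hg
    · intro q _ r _ h
      obtain ⟨h1, h2⟩ := Sigma.mk.inj_iff.1 h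
      exact Prod.ext h1 (eq_of_heq h2)
  have hGsplit : (G.filter (fun q => q.1 ≤ q.2)).card + (G.filter (fun q => ¬ q.1 ≤ q.2)).card = G.card := by
    apply card_filter_add_card_filter_not
  have hGT : G.card ≤ 2 * ∑ m ∈ Icc 1 M, Nat.totient m := by
    omega
  have hcastG : ((G.card : ℕ) : ℝ) ≤ 2 * ∑ m ∈ Icc 1 M, (Nat.totient m : ℝ) := by
    have : ((G.card : ℕ) : ℝ) ≤ ((2 * ∑ m ∈ Icc 1 M, Nat.totient m : ℕ) : ℝ) := by
      exact_mod_cast hGT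
    push_cast at this
    exact this
  have := good_pairs_lb M hM
  linarith

/-- a representative in [1,n] of the inverse of a mod n -/
def invd (n a : ℕ) : ℕ := if a ^ (Nat.totient n - 1) % n = 0 then n else a ^ (Nat.totient n - 1) % n

lemma invd_facts (n a : ℕ) (hn : 1 ≤ n) (ha1 : 1 ≤ a) (hcop : Nat.Coprime a n) :
    1 ≤ invd n a ∧ invd n a ≤ n ∧ a * invd n a = ((a * invd n a - 1)/n) * n + 1
      ∧ (a * invd n a - 1)/n ≤ a := by
  set e := a ^ (Nat.totient n - 1) % n with he
  have hmod : a * e ≡ 1 [MOD n] := by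
    have heu : a ^ (Nat.totient n) ≡ 1 [MOD n] := Nat.ModEq.pow_totient hcop
    have hpow : a * a ^ (Nat.totient n - 1) = a ^ (Nat.totient n) := by
      rw [← pow_succ']
      congr 1
      have := Nat.totient_pos.2 (show 0 < n by omega)
      omega
    calc a * e ≡ a * a ^ (Nat.totient n - 1) [MOD n] :=
          Nat.ModEq.mul_left a (Nat.mod_modEq _ n)
      _ = a ^ (Nat.totient n) := hpow
      _ ≡ 1 [MOD n] := heu
  by_cases hez : e = 0
  · -- then n = 1
    have h01 : (0:ℕ) ≡ 1 [MOD n] := by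
      have := hmod
      rw [hez, mul_zero] at this
      exact this
    have hn1 : n = 1 := by
      have hdvd1 : n ∣ 1 := by
        have := (Nat.modEq_iff_dvd' (by omega)).1 h01
        simpa using this
      exact Nat.eq_one_of_dvd_one hdvd1
    have hd : invd n a = 1 := by rw [invd, ← he, if_pos hez, hn1]
    rw [hd, hn1]
    simp only [mul_one, Nat.div_one]
    omega
  · have hd : invd n a = e := by rw [invd, ← he, if_neg hez]
    have helt : e < n := Nat.mod_lt _ (by omega)
    have had1 : 1 ≤ a * e := Nat.one_le_iff_ne_zero.2 (by positivity)
    have hdvd : n ∣ a * e - 1 := (Nat.modEq_iff_dvd' had1).1 hmod.symm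
    have hbn : (a * e - 1)/n * n = a * e - 1 := Nat.div_mul_cancel hdvd
    have heq : a * e = (a * e - 1)/n * n + 1 := by omega
    have hble : (a * e - 1)/n ≤ a := by
      have h2 : a * e - 1 < a * n := by
        have h3 : a * e ≤ a * n := Nat.mul_le_mul_left a helt.le
        omega
      have h4 : (a * e - 1)/n * n < a * n := by omega
      have := Nat.lt_of_mul_lt_mul_right h4
      omega
    rw [hd]
    exact ⟨by omega, by omega, heq, hble⟩

/-- there is `c > 0` such that for all integers `Q ≥ 1` and reals `X ≥ Q`,
`#Γ₀(Q, X) ≥ c · X² / (Q · log log (X + 3))`. -/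
theorem stmt12 :
    ∃ c : ℝ, 0 < c ∧ ∀ (Q : ℤ) (X : ℝ), 1 ≤ Q → (Q : ℝ) ≤ X →
      c * X ^ 2 / ((Q : ℝ) * Real.log (Real.log (X + 3)))
        ≤ ({p : ℤ × ℤ × ℤ × ℤ |
            p.1 * p.2.2.2 - p.2.1 * p.2.2.1 = 1 ∧ Q ∣ p.2.2.1 ∧
            (|p.1| : ℝ) ≤ X ∧ (|p.2.1| : ℝ) ≤ X ∧ (|p.2.2.1| : ℝ) ≤ X ∧
            (|p.2.2.2| : ℝ) ≤ X}.ncard : ℝ) := by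
  refine ⟨Real.exp (-11) / 32, by positivity, ?_⟩
  intro Q X hQ hQX
  set S : Set (ℤ × ℤ × ℤ × ℤ) := {p : ℤ × ℤ × ℤ × ℤ |
            p.1 * p.2.2.2 - p.2.1 * p.2.2.1 = 1 ∧ Q ∣ p.2.2.1 ∧
            (|p.1| : ℝ) ≤ X ∧ (|p.2.1| : ℝ) ≤ X ∧ (|p.2.2.1| : ℝ) ≤ X ∧
            (|p.2.2.2| : ℝ) ≤ X} with hS
  have hQR : (1:ℝ) ≤ (Q:ℝ) := by exact_mod_cast hQ
  have hQ0 : (0:ℝ) < (Q:ℝ) := by linarith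
  have hX1 : (1:ℝ) ≤ X := le_trans hQR hQX
  have hX0 : (0:ℝ) < X := by linarith
  set Qn : ℕ := Q.toNat with hQndef
  have hQn : ((Qn : ℕ) : ℤ) = Q := Int.toNat_of_nonneg (by omega)
  have hQnR : ((Qn : ℕ) : ℝ) = (Q:ℝ) := by exact_mod_cast congrArg (fun z : ℤ => (z:ℝ)) hQn
  have hQn1 : 1 ≤ Qn := by omega
  set M : ℕ := ⌊X / (Q:ℝ)⌋₊ with hMdef
  have hXQ1 : (1:ℝ) ≤ X / (Q:ℝ) := (one_le_div hQ0).2 hQX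
  have hM1 : 1 ≤ M := Nat.le_floor (by push_cast; exact hXQ1)
  have hM0 : (0:ℝ) < M := by exact_mod_cast (by omega : 0 < M)
  have hMle : (M:ℝ) ≤ X / (Q:ℝ) := Nat.floor_le (by positivity)
  have hMge : X / (Q:ℝ) ≤ 2 * M := by
    have h1 := Nat.lt_floor_add_one (X / (Q:ℝ))
    have h2 : (1:ℝ) ≤ (M:ℝ) := by exact_mod_cast hM1
    rw [← hMdef] at h1
    linarith
  set L := Real.log (Real.log (X + 3)) with hL
  have hLpos : (0:ℝ) < L := by
    have : Real.log (Real.log 4) ≤ L := loglog_mono le_rfl (by linarith)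
    linarith [loglog4_pos]
  -- the finset of parameters
  set T : Finset ((_ : ℕ) × ℕ) :=
    (Icc 1 M).sigma (fun m => (Icc 1 (Qn*m)).filter (fun a => Nat.Coprime a (Qn*m))) with hT
  -- the map to matrices
  set F : (Σ _ : ℕ, ℕ) → ℤ × ℤ × ℤ × ℤ := fun s =>
    ((s.2 : ℤ), (((s.2 * invd (Qn*s.1) s.2 - 1)/(Qn*s.1) : ℕ) : ℤ),
      ((Qn*s.1 : ℕ) : ℤ), ((invd (Qn*s.1) s.2 : ℕ) : ℤ)) with hF
  -- membership facts
  have hmem : ∀ s ∈ T, F s ∈ S := by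
    rintro ⟨m, a⟩ hs
    rw [hT, mem_sigma, mem_filter, mem_Icc, mem_Icc] at hs
    obtain ⟨⟨hm1, hmM⟩, ⟨ha1, han⟩, hcop⟩ := hs
    have hm1' : 1 ≤ m := hm1
    have hmM' : m ≤ M := hmM
    have ha1' : 1 ≤ a := ha1
    have hn1 : 1 ≤ Qn * m := Nat.one_le_iff_ne_zero.2 (Nat.mul_ne_zero (by omega) (by omega))
    obtain ⟨hd1, hdn, heq, hble⟩ := invd_facts (Qn*m) a hn1 ha1 hcop
    have hnX : ((Qn * m : ℕ) : ℝ) ≤ X := by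
      push_cast
      calc (Qn:ℝ) * (m:ℝ) ≤ (Q:ℝ) * (M:ℝ) := by
            rw [hQnR]
            apply mul_le_mul_of_nonneg_left _ (by positivity)
            exact_mod_cast hmM
        _ ≤ (Q:ℝ) * (X / (Q:ℝ)) := by
            apply mul_le_mul_of_nonneg_left hMle (by positivity)
        _ = X := by field_simp
    have habs : ∀ k : ℕ, (k:ℝ) ≤ X → |((k:ℤ):ℝ)| ≤ X := by
      intro k hk
      rw [abs_of_nonneg (by positivity : (0:ℝ) ≤ ((k:ℤ):ℝ))]
      exact_mod_cast hk
    have haX : ((a:ℕ):ℝ) ≤ X :=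
      le_trans (by exact_mod_cast han : ((a:ℕ):ℝ) ≤ ((Qn*m : ℕ):ℝ)) hnX
    have hdX : ((invd (Qn*m) a : ℕ):ℝ) ≤ X :=
      le_trans (by exact_mod_cast hdn : ((invd (Qn*m) a : ℕ):ℝ) ≤ ((Qn*m : ℕ):ℝ)) hnX
    have hbX : (((a * invd (Qn*m) a - 1)/(Qn*m) : ℕ):ℝ) ≤ X :=
      le_trans (by exact_mod_cast hble) haX
    rw [hS]
    simp only [Set.mem_setOf_eq, hF]
    refine ⟨?_, ?_, ?_, ?_, ?_, ?_⟩
    · -- determinant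
      have key : (((a * invd (Qn*m) a - 1)/(Qn*m) : ℕ) : ℤ) * ((Qn*m : ℕ) : ℤ) + 1
          = ((a:ℕ):ℤ) * ((invd (Qn*m) a : ℕ) : ℤ) := by exact_mod_cast heq.symm
      linarith [key]
    · exact ⟨(m:ℤ), by push_cast [← hQn]; ring⟩
    · exact habs a haX
    · exact habs _ hbX
    · exact habs (Qn*m) hnX
    · exact habs _ hdX
  have hinj : Set.InjOn F ↑T := by
    rintro ⟨m, a⟩ _ ⟨m', a'⟩ _ h
    rw [hF] at h
    simp only [Prod.mk.injEq] at h
    obtain ⟨h1, _, h3, _⟩ := h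
    have ha : a = a' := by exact_mod_cast h1
    have hmm : Qn * m = Qn * m' := by exact_mod_cast h3
    have hm : m = m' := Nat.eq_of_mul_eq_mul_left (by omega) hmm
    subst ha; subst hm; rfl
  -- S is finite
  have hfin : S.Finite := by
    set A : ℤ := ⌈X⌉ with hA
    apply Set.Finite.subset
      (Finset.finite_toSet (Finset.Icc ((-A, -A, -A, -A) : ℤ × ℤ × ℤ × ℤ) (A, A, A, A)))
    intro p hp
    rw [hS, Set.mem_setOf_eq] at hp
    obtain ⟨_, _, h1, h2, h3, h4⟩ := hp
    have hXA : X ≤ (A:ℝ) := Int.le_ceil X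
    have habs' : ∀ z : ℤ, |(z:ℝ)| ≤ X → -A ≤ z ∧ z ≤ A := by
      intro z hz
      have hz' : ((|z| : ℤ) : ℝ) ≤ X := by rw [Int.cast_abs]; exact hz
      have : (|z| : ℤ) ≤ A := by exact_mod_cast le_trans hz' hXA
      constructor <;> [linarith [neg_abs_le z]; linarith [le_abs_self z]]
    simp only [Finset.coe_Icc, Set.mem_Icc, Prod.le_def]
    obtain ⟨g1a, g1b⟩ := habs' _ h1
    obtain ⟨g2a, g2b⟩ := habs' _ h2
    obtain ⟨g3a, g3b⟩ := habs' _ h3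
    obtain ⟨g4a, g4b⟩ := habs' _ h4
    exact ⟨⟨g1a, g2a, g3a, g4a⟩, ⟨g1b, g2b, g3b, g4b⟩⟩
  -- cardinality chain
  have hcard1 : T.card ≤ S.ncard := by
    have himg : ↑(T.image F) ⊆ S := by
      intro p hp
      rw [Finset.coe_image] at hp
      obtain ⟨s, hs, rfl⟩ := hp
      exact hmem s hs
    calc T.card = (T.image F).card := (Finset.card_image_of_injOn hinj).symm
      _ = (↑(T.image F) : Set (ℤ×ℤ×ℤ×ℤ)).ncard := (Set.ncard_coe_finset _).symm
      _ ≤ S.ncard := Set.ncard_le_ncard himg hfin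
  have hcard2 : T.card = ∑ m ∈ Icc 1 M, Nat.totient (Qn * m) := by
    rw [hT, card_sigma]
    refine sum_congr rfl fun m hm => ?_
    rw [mem_Icc] at hm
    exact totient_Icc (Qn*m) (Nat.one_le_iff_ne_zero.2 (Nat.mul_ne_zero (by omega) (by omega)))
  have hcard3 : Nat.totient Qn * ∑ m ∈ Icc 1 M, Nat.totient m ≤ T.card := by
    rw [hcard2, Finset.mul_sum]
    exact sum_le_sum fun m _ => Nat.totient_super_multiplicative Qn m
  -- real endgame
  have hreal1 : (Nat.totient Qn : ℝ) * ∑ m ∈ Icc 1 M, (Nat.totient m : ℝ) ≤ (S.ncard : ℝ) := by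
    have : ((Nat.totient Qn * ∑ m ∈ Icc 1 M, Nat.totient m : ℕ) : ℝ) ≤ (S.ncard : ℝ) := by
      exact_mod_cast le_trans hcard3 hcard1
    push_cast at this
    exact this
  have htot : Real.exp (-11) * (Q:ℝ) / L ≤ (Nat.totient Qn : ℝ) := by
    have h1 := totient_lower Qn hQn1
    have h2 : Real.log (Real.log ((Qn:ℝ)+3)) ≤ L := by
      apply loglog_mono (by rw [hQnR]; linarith) (by rw [hQnR]; linarith)
    have h3 : (0:ℝ) < Real.log (Real.log ((Qn:ℝ)+3)) := by
      have : Real.log (Real.log 4) ≤ Real.log (Real.log ((Qn:ℝ)+3)) :=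
        loglog_mono le_rfl (by rw [hQnR]; linarith)
      linarith [loglog4_pos]
    calc Real.exp (-11) * (Q:ℝ) / L ≤ Real.exp (-11) * (Q:ℝ) / Real.log (Real.log ((Qn:ℝ)+3)) := by
          apply div_le_div_of_nonneg_left (by positivity) h3 h2
      _ = Real.exp (-11) * (Qn:ℝ) / Real.log (Real.log ((Qn:ℝ)+3)) := by rw [hQnR]
      _ ≤ _ := h1
  have hsum := sum_totient_lb M hM1
  have hMX : X / (2 * (Q:ℝ)) ≤ (M:ℝ) := by
    rw [div_le_iff₀ (by positivity)]
    rw [div_le_iff₀ hQ0] at hMge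
    linarith
  have hM2 : (X / (2 * (Q:ℝ)))^2 ≤ (M:ℝ)^2 := by
    apply pow_le_pow_left₀ (by positivity) hMX
  have hchain : Real.exp (-11) * (Q:ℝ) / L * ((X / (2 * (Q:ℝ)))^2 / 8) ≤ (S.ncard : ℝ) := by
    calc Real.exp (-11) * (Q:ℝ) / L * ((X / (2 * (Q:ℝ)))^2 / 8)
        ≤ Real.exp (-11) * (Q:ℝ) / L * ((M:ℝ)^2 / 8) := by
          apply mul_le_mul_of_nonneg_left (by linarith) (by positivity)
      _ ≤ (Nat.totient Qn : ℝ) * ((M:ℝ)^2 / 8) := by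
          apply mul_le_mul_of_nonneg_right htot (by positivity)
      _ ≤ (Nat.totient Qn : ℝ) * ∑ m ∈ Icc 1 M, (Nat.totient m : ℝ) := by
          apply mul_le_mul_of_nonneg_left (by linarith) (by positivity)
      _ ≤ _ := hreal1
  have hfinal : Real.exp (-11) / 32 * X ^ 2 / ((Q:ℝ) * L)
      = Real.exp (-11) * (Q:ℝ) / L * ((X / (2 * (Q:ℝ)))^2 / 8) := by
    field_simp
    ring
  rw [hfinal]
  exact hchain
end

section
/- For every ε > 0 there is a constant C(ε) such that for all integers Q ≥ 1 and reals X ≥ 2 with Q ≤ X, the cardinality of Γ₀(Q, X) = {A ∈ Γ₀(Q) : height of A ≤ X} is at most C(ε) · X^{2+ε} / Q. -/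
open Finset

private lemma sum_inv_le_log (n : ℕ) :
    ∑ k ∈ Finset.Icc (1:ℤ) (n:ℤ), (1:ℝ)/(k:ℝ) ≤ 1 + Real.log n := by
  have h1 : ∑ k ∈ Finset.Icc (1:ℤ) (n:ℤ), (1:ℝ)/(k:ℝ) = ((harmonic n : ℚ) : ℝ) := by
    rw [harmonic_eq_sum_Icc]
    push_cast
    refine Finset.sum_nbij' (fun k => k.toNat) (fun i => (i:ℤ)) ?_ ?_ ?_ ?_ ?_
    · intro a ha; simp only [Finset.mem_Icc] at ha ⊢; omega
    · intro a ha; simp only [Finset.mem_Icc] at ha ⊢; omega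
    · intro a ha; simp only [Finset.mem_Icc] at ha; omega
    · intro a ha; simp
    · intro a ha; simp only [Finset.mem_Icc] at ha
      have hz : ((a.toNat : ℕ) : ℝ) = (a : ℝ) := by
        exact_mod_cast congrArg (fun z : ℤ => (z:ℝ)) (Int.toNat_of_nonneg (by omega))
      rw [one_div, hz]
  rw [h1]
  exact harmonic_le_one_add_log n

private lemma resCount (N m : ℤ) (hN : 0 ≤ N) (hm : 0 < m) (P : ℤ → Prop) [DecidablePred P]
    (hP : ∀ d, P d → ∀ d', P d' → m ∣ d - d') :
    (((Finset.Icc (-N) N).filter P).card : ℝ) ≤ 2 * (N : ℝ) / (m : ℝ) + 2 := by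
  have key : ((Finset.Icc (-N) N).filter P).card ≤ (Finset.Icc (-(N/m) - 1) (N/m)).card := by
    apply Finset.card_le_card_of_injOn (fun d => d / m)
    · intro d hd
      simp only [Finset.mem_coe, Finset.mem_filter, Finset.mem_Icc] at hd ⊢
      constructor
      · refine (Int.le_ediv_iff_mul_le hm).2 ?_
        have h2 := Int.lt_ediv_add_one_mul_self N hm
        nlinarith [hd.1.1]
      · exact Int.ediv_le_ediv hm hd.1.2
    · intro d hd d' hd' hdd
      simp only [Finset.coe_filter, Set.mem_setOf_eq, Finset.mem_Icc] at hd hd'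
      have hdvd : m ∣ d' - d := hP d' hd'.2 d hd.2
      have h1 : d % m = d' % m := Int.modEq_iff_dvd.2 hdvd
      have hdd' : d / m = d' / m := hdd
      have h2 := Int.mul_ediv_add_emod d m
      have h3 := Int.mul_ediv_add_emod d' m
      rw [hdd'] at h2
      omega
  have hq : 0 ≤ N / m := Int.ediv_nonneg hN hm.le
  have h4 : ((Finset.Icc (-(N/m) - 1) (N/m)).card : ℝ) ≤ 2 * ((N/m : ℤ) : ℝ) + 2 := by
    rw [Int.card_Icc]
    have h5 : (N/m + 1 - (-(N/m) - 1)) = 2*(N/m) + 2 := by ring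
    rw [h5]
    have hz : (((2*(N/m)+2).toNat : ℕ) : ℝ) = 2*((N/m : ℤ):ℝ)+2 := by
      exact_mod_cast Int.toNat_of_nonneg (by omega)
    rw [hz]
  have h6 : ((N/m : ℤ) : ℝ) ≤ (N:ℝ) / (m:ℝ) := by
    rw [le_div_iff₀ (by exact_mod_cast hm)]
    have h7 : m * (N/m) ≤ N := by
      have := Int.emod_nonneg N hm.ne'
      have := Int.mul_ediv_add_emod N m
      omega
    exact_mod_cast (by linarith [h7] : (N/m) * m ≤ N)
  calc (((Finset.Icc (-N) N).filter P).card : ℝ) ≤ _ := by exact_mod_cast key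
    _ ≤ 2 * ((N/m : ℤ) : ℝ) + 2 := h4
    _ ≤ 2 * (N : ℝ) / (m : ℝ) + 2 := by
        rw [mul_div_assoc]; linarith

private lemma finalNum (ε X q : ℝ) (hε : 0 < ε) (hX : 2 ≤ X) (hq1 : 1 ≤ q) (hqX : q ≤ X) :
    6 * X + 3 * X * (2 * (2 * X / q * (1 + Real.log X) + 2 * (X / q)))
      ≤ (30 + 12/ε) * X ^ (2 + ε) / q := by
  have hX0 : (0:ℝ) < X := by linarith
  have hq0 : (0:ℝ) < q := by linarith
  have hlogX : Real.log X ≤ X ^ ε / ε := by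
    have h1 := Real.log_le_sub_one_of_pos (Real.rpow_pos_of_pos hX0 ε)
    rw [Real.log_rpow hX0] at h1
    rw [le_div_iff₀ hε]
    nlinarith
  have honeX : (1:ℝ) ≤ X ^ ε := by
    calc (1:ℝ) = (1:ℝ) ^ ε := (Real.one_rpow ε).symm
      _ ≤ X ^ ε := Real.rpow_le_rpow (by norm_num) (by linarith) hε.le
  have hXsq : X ^ (2 + ε) = X ^ 2 * X ^ ε := by
    rw [Real.rpow_add hX0]
    congr 1
    rw [show (2:ℝ) = ((2:ℕ):ℝ) by norm_num, Real.rpow_natCast]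
  rw [hXsq]
  have hlog0 : (0:ℝ) ≤ Real.log X := Real.log_nonneg (by linarith)
  have hXQ : X ≤ X^2 / q := by
    rw [le_div_iff₀ hq0]
    nlinarith
  have e1 : 3 * X * (2 * (2 * X / q * (1 + Real.log X) + 2 * (X / q)))
      = (12 * (1 + Real.log X) + 12) * (X^2 / q) := by
    field_simp
    ring
  have hXsqQ : (0:ℝ) ≤ X^2 / q := by positivity
  have hbig : 6 * X + 3 * X * (2 * (2 * X / q * (1 + Real.log X) + 2 * (X / q)))
      ≤ (30 + 12 * Real.log X) * (X^2 / q) := by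
    rw [e1]
    nlinarith
  have hcoef : (30 + 12 * Real.log X) ≤ (30 + 12/ε) * X ^ ε := by
    have h1 : 12 * Real.log X ≤ (12/ε) * X ^ ε := by
      rw [div_mul_eq_mul_div, le_div_iff₀ hε]
      nlinarith [(le_div_iff₀ hε).1 hlogX]
    nlinarith [honeX]
  calc 6 * X + 3 * X * (2 * (2 * X / q * (1 + Real.log X) + 2 * (X / q)))
      ≤ (30 + 12 * Real.log X) * (X^2 / q) := hbig
    _ ≤ (30 + 12/ε) * X ^ ε * (X^2 / q) := mul_le_mul_of_nonneg_right hcoef hXsqQ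
    _ = (30 + 12/ε) * (X^2 * X^ε) / q := by ring

/-- for every `ε > 0` there is `C(ε)` such that for all integers `Q ≥ 1`
and reals `X ≥ 2` with `Q ≤ X`, `#Γ₀(Q, X) ≤ C(ε) · X^{2+ε} / Q`. -/
theorem stmt13 (ε : ℝ) (hε : 0 < ε) :
    ∃ C : ℝ, 0 < C ∧ ∀ (Q : ℤ) (X : ℝ), 1 ≤ Q → 2 ≤ X → (Q : ℝ) ≤ X →
      ({p : ℤ × ℤ × ℤ × ℤ |
          p.1 * p.2.2.2 - p.2.1 * p.2.2.1 = 1 ∧ Q ∣ p.2.2.1 ∧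
          (|p.1| : ℝ) ≤ X ∧ (|p.2.1| : ℝ) ≤ X ∧ (|p.2.2.1| : ℝ) ≤ X ∧
          (|p.2.2.2| : ℝ) ≤ X}.ncard : ℝ)
        ≤ C * X ^ (2 + ε) / (Q : ℝ) := by
  refine ⟨30 + 12/ε, by positivity, ?_⟩
  intro Q X hQ hX hQX
  classical
  have hX0 : (0:ℝ) < X := by linarith
  have hQR : (0:ℝ) < (Q:ℝ) := by exact_mod_cast hQ
  set N : ℤ := ⌊X⌋ with hNdef
  have hNX : (N:ℝ) ≤ X := Int.floor_le X
  have hN2 : 2 ≤ N := Int.le_floor.2 (by exact_mod_cast hX)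
  have hN0 : 0 ≤ N := by omega
  have hQN : Q ≤ N := Int.le_floor.2 hQX
  set I : Finset ℤ := Finset.Icc (-N) N with hIdef
  have hmemI : ∀ z : ℤ, z ∈ I ↔ |(z:ℝ)| ≤ X := by
    intro z
    rw [← Int.cast_abs, hIdef, Finset.mem_Icc]
    constructor
    · intro h
      have h1 : |z| ≤ N := abs_le.2 h
      calc ((|z|:ℤ):ℝ) ≤ (N:ℝ) := by exact_mod_cast h1
        _ ≤ X := hNX
    · intro h
      exact abs_le.1 (Int.le_floor.2 h)
  have hIcard : (I.card : ℝ) ≤ 3 * X := by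
    rw [hIdef, Int.card_Icc]
    have hz' : ((N + 1 - -N).toNat : ℤ) = 2*N+1 := by omega
    have hz : (((N + 1 - -N).toNat : ℕ) : ℝ) = 2*(N:ℝ)+1 := by exact_mod_cast hz'
    rw [hz]; linarith
  set F : Finset (ℤ×ℤ×ℤ×ℤ) := ((I ×ˢ I ×ˢ I ×ˢ I).filter
    (fun p => p.1 * p.2.2.2 - p.2.1 * p.2.2.1 = 1 ∧ Q ∣ p.2.2.1)) with hFdef
  -- step 1: ncard ≤ F.card
  have hle : ({p : ℤ × ℤ × ℤ × ℤ |
          p.1 * p.2.2.2 - p.2.1 * p.2.2.1 = 1 ∧ Q ∣ p.2.2.1 ∧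
          (|p.1| : ℝ) ≤ X ∧ (|p.2.1| : ℝ) ≤ X ∧ (|p.2.2.1| : ℝ) ≤ X ∧
          (|p.2.2.2| : ℝ) ≤ X}.ncard) ≤ F.card := by
    rw [← Set.ncard_coe_finset F]
    refine Set.ncard_le_ncard ?_ F.finite_toSet
    intro p hp
    obtain ⟨h1, h2, h3, h4, h5, h6⟩ := hp
    simp only [hFdef, Finset.coe_filter, Set.mem_setOf_eq, Finset.mem_product]
    exact ⟨⟨(hmemI _).2 h3, (hmemI _).2 h4, (hmemI _).2 h5, (hmemI _).2 h6⟩, h1, h2⟩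
  -- step 2 : c = 0 part
  have hC0 : ((F.filter (fun p => p.2.2.1 = 0)).card : ℝ) ≤ 6 * X := by
    have hcard : (F.filter (fun p => p.2.2.1 = 0)).card ≤ (({-1,1} : Finset ℤ) ×ˢ I).card := by
      apply Finset.card_le_card_of_injOn (fun p => (p.1, p.2.1))
      · rintro ⟨a,b,c,d⟩ hp
        simp only [Finset.mem_coe, hFdef, Finset.mem_filter, Finset.mem_product] at hp
        obtain ⟨⟨⟨ha, hb, hc, hd⟩, heq, hdvd⟩, hc0⟩ := hp
        simp only at heq hc0 ⊢
        subst hc0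
        have had : a * d = 1 := by linear_combination heq
        have h1 := Int.eq_one_or_neg_one_of_mul_eq_one had
        simp only [Finset.mem_coe, Finset.mem_product, Finset.mem_insert, Finset.mem_singleton]
        exact ⟨by tauto, hb⟩
      · rintro ⟨a,b,c,d⟩ hp ⟨a',b',c',d'⟩ hp' hab
        simp only [Finset.mem_coe, Finset.mem_filter, hFdef] at hp hp'
        obtain ⟨⟨_, heq, _⟩, hc0⟩ := hp
        obtain ⟨⟨_, heq', _⟩, hc0'⟩ := hp'
        simp only [Prod.mk.injEq] at hab ⊢
        obtain ⟨ha, hb⟩ := hab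
        subst ha; subst hb; subst hc0; subst hc0'
        have had : a * d = 1 := by linear_combination heq
        have had' : a * d' = 1 := by linear_combination heq'
        have ha0 : a ≠ 0 := by rintro rfl; simp at had
        exact ⟨rfl, rfl, rfl, mul_left_cancel₀ ha0 (had.trans had'.symm)⟩
    calc ((F.filter (fun p => p.2.2.1 = 0)).card : ℝ)
        ≤ ((({-1,1} : Finset ℤ) ×ˢ I).card : ℝ) := by exact_mod_cast hcard
      _ = 2 * (I.card : ℝ) := by rw [Finset.card_product]; norm_num
      _ ≤ 6 * X := by linarith
  -- step 3 : c ≠ 0 part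
  set Cset : Finset ℤ := I.filter (fun c => c ≠ 0 ∧ Q ∣ c) with hCdef
  set G : Finset (ℤ×ℤ×ℤ) := ((Cset ×ˢ I ×ˢ I).filter
    (fun q => q.1 ∣ q.2.1 * q.2.2 - 1)) with hGdef
  have hF1 : (F.filter (fun p => ¬ p.2.2.1 = 0)).card ≤ G.card := by
    apply Finset.card_le_card_of_injOn (fun p => (p.2.2.1, p.1, p.2.2.2))
    · rintro ⟨a,b,c,d⟩ hp
      simp only [Finset.mem_coe, hFdef, Finset.mem_filter, Finset.mem_product] at hp
      obtain ⟨⟨⟨ha, hb, hc, hd⟩, heq, hdvd⟩, hc0⟩ := hp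
      simp only [Finset.mem_coe, hGdef, hCdef, Finset.mem_filter, Finset.mem_product]
      exact ⟨⟨⟨hc, hc0, hdvd⟩, ha, hd⟩, ⟨b, by linear_combination heq⟩⟩
    · rintro ⟨a,b,c,d⟩ hp ⟨a',b',c',d'⟩ hp' hab
      simp only [Finset.mem_coe, Finset.mem_filter, hFdef] at hp hp'
      obtain ⟨⟨_, heq, _⟩, hc0⟩ := hp
      obtain ⟨⟨_, heq', _⟩, hc0'⟩ := hp'
      simp only [Prod.mk.injEq] at hab ⊢
      obtain ⟨hc1, ha1, hd1⟩ := hab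
      subst hc1; subst ha1; subst hd1
      refine ⟨rfl, ?_, rfl, rfl⟩
      have : b * c = b' * c := by linear_combination heq' - heq
      exact mul_right_cancel₀ hc0 this
  -- step 4 : count G fiberwise
  have hGcard : (G.card : ℝ) ≤ 3 * X * ∑ c ∈ Cset, (2 * X / |(c:ℝ)| + 2) := by
    have hmaps : ∀ q ∈ G, (fun q : ℤ×ℤ×ℤ => (q.1, q.2.1)) q ∈ Cset ×ˢ I := by
      rintro ⟨c,a,d⟩ hq
      simp only [hGdef, Finset.mem_filter, Finset.mem_product] at hq
      simp only [Finset.mem_product]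
      exact ⟨hq.1.1, hq.1.2.1⟩
    have hfib := Finset.card_eq_sum_card_fiberwise hmaps
    have hfiber : ∀ x ∈ Cset ×ˢ I,
        ((G.filter (fun q => (q.1, q.2.1) = x)).card : ℝ) ≤ 2 * X / |(x.1:ℝ)| + 2 := by
      rintro ⟨c,a⟩ hx
      simp only [Finset.mem_product, hCdef, Finset.mem_filter] at hx
      have hc0 : c ≠ 0 := hx.1.2.1
      have hm : 0 < |c| := abs_pos.2 hc0
      have hinj : (G.filter (fun q => (q.1, q.2.1) = (c,a))).card
          ≤ ((Finset.Icc (-N) N).filter (fun d => c ∣ a * d - 1)).card := by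
        apply Finset.card_le_card_of_injOn (fun q => q.2.2)
        · rintro ⟨c1,a1,d1⟩ hq
          simp only [Finset.mem_coe, hGdef, Finset.mem_filter, Finset.mem_product, Prod.mk.injEq] at hq
          obtain ⟨⟨⟨hcm, ham, hdm⟩, hdvd⟩, hc1, ha1⟩ := hq
          subst hc1; subst ha1
          simp only [Finset.mem_coe, Finset.mem_filter]
          exact ⟨hdm, hdvd⟩
        · rintro ⟨c1,a1,d1⟩ hq ⟨c2,a2,d2⟩ hq' hd
          simp only [Finset.mem_coe, Finset.mem_filter, Prod.mk.injEq] at hq hq'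
          obtain ⟨-, hc1, ha1⟩ := hq
          obtain ⟨-, hc2, ha2⟩ := hq'
          simp only at hd
          simp only [Prod.mk.injEq]
          exact ⟨hc1.trans hc2.symm, ha1.trans ha2.symm, hd⟩
      have hP : ∀ d, (c ∣ a * d - 1) → ∀ d', (c ∣ a * d' - 1) → |c| ∣ d - d' := by
        intro d hd d' hd'
        obtain ⟨t, ht⟩ := hd
        obtain ⟨t', ht'⟩ := hd'
        have hco : IsCoprime c a := ⟨-t, d, by linear_combination ht⟩
        have hdvd : c ∣ a * (d - d') := ⟨t - t', by linear_combination ht - ht'⟩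
        exact (abs_dvd _ _).2 (hco.dvd_of_dvd_mul_left hdvd)
      have hres := resCount N |c| hN0 hm (fun d => c ∣ a * d - 1) hP
      have habs : ((|c| : ℤ) : ℝ) = |(c:ℝ)| := Int.cast_abs
      have hmR : (0:ℝ) < |(c:ℝ)| := by
        rw [← habs]; exact_mod_cast hm
      calc ((G.filter (fun q => (q.1, q.2.1) = (c,a))).card : ℝ)
          ≤ (((Finset.Icc (-N) N).filter (fun d => c ∣ a * d - 1)).card : ℝ) := by
            exact_mod_cast hinj
        _ ≤ 2 * (N:ℝ) / ((|c|:ℤ):ℝ) + 2 := hres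
        _ ≤ 2 * X / |(c:ℝ)| + 2 := by
            rw [habs]
            have : 2 * (N:ℝ) ≤ 2 * X := by linarith
            gcongr
    calc (G.card : ℝ) = ∑ x ∈ Cset ×ˢ I, ((G.filter (fun q => (q.1, q.2.1) = x)).card : ℝ) := by
          rw [hfib]; push_cast; ring
      _ ≤ ∑ x ∈ Cset ×ˢ I, (2 * X / |(x.1:ℝ)| + 2) := Finset.sum_le_sum hfiber
      _ = ∑ c ∈ Cset, (I.card : ℝ) * (2 * X / |(c:ℝ)| + 2) := by
          rw [Finset.sum_product]
          refine Finset.sum_congr rfl fun c _ => ?_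
          dsimp only
          rw [Finset.sum_const, nsmul_eq_mul]
      _ ≤ ∑ c ∈ Cset, 3 * X * (2 * X / |(c:ℝ)| + 2) := by
          refine Finset.sum_le_sum fun c _ => ?_
          have hpos : (0:ℝ) ≤ 2 * X / |(c:ℝ)| + 2 := by positivity
          exact mul_le_mul_of_nonneg_right hIcard hpos
      _ = 3 * X * ∑ c ∈ Cset, (2 * X / |(c:ℝ)| + 2) := by rw [Finset.mul_sum]
  -- step 5 : the sum over Cset
  set K : ℤ := N / Q with hKdef
  have hK1 : 1 ≤ K := (Int.le_ediv_iff_mul_le (by omega)).2 (by omega)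
  have hKX : (K:ℝ) ≤ X / (Q:ℝ) := by
    rw [le_div_iff₀ hQR]
    have h1 : K * Q ≤ N := (Int.le_ediv_iff_mul_le (by omega : (0:ℤ) < Q)).1 le_rfl
    calc (K:ℝ) * (Q:ℝ) ≤ (N:ℝ) := by exact_mod_cast h1
      _ ≤ X := hNX
  have hsumC : ∑ c ∈ Cset, (2 * X / |(c:ℝ)| + 2)
      ≤ 2 * (2 * X / (Q:ℝ) * (1 + Real.log X) + 2 * (X / (Q:ℝ))) := by
    have hCsub : Cset ⊆ ((Finset.Icc (-K) K).erase 0).image (fun k => Q * k) := by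
      intro c hc
      simp only [hCdef, Finset.mem_filter, hIdef, Finset.mem_Icc] at hc
      obtain ⟨⟨h1, h2⟩, hc0, k, hk⟩ := hc
      refine Finset.mem_image.2 ⟨k, ?_, hk.symm⟩
      simp only [Finset.mem_erase, Finset.mem_Icc]
      have hk0 : k ≠ 0 := by rintro rfl; simp at hk; exact hc0 hk
      have h3 : |Q * k| ≤ N := by
        rw [← hk]; exact abs_le.2 ⟨h1, h2⟩
      have h4 : |k| * Q ≤ N := by
        rwa [abs_mul, abs_of_nonneg (by omega : (0:ℤ) ≤ Q), mul_comm] at h3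
      have h5 : |k| ≤ K := (Int.le_ediv_iff_mul_le (by omega)).2 h4
      have h6 := abs_le.1 h5
      exact ⟨hk0, h6.1, h6.2⟩
    have hstep1 : ∑ c ∈ Cset, (2 * X / |(c:ℝ)| + 2)
        ≤ ∑ k ∈ (Finset.Icc (-K) K).erase 0, (2 * X / ((Q:ℝ) * |(k:ℝ)|) + 2) := by
      refine le_trans (Finset.sum_le_sum_of_subset_of_nonneg hCsub fun i _ _ => by positivity) ?_
      rw [Finset.sum_image (fun x _ y _ h => mul_left_cancel₀ (by omega : (Q:ℤ) ≠ 0) h)]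
      refine le_of_eq (Finset.sum_congr rfl fun k _ => ?_)
      congr 1
      congr 1
      push_cast
      rw [abs_mul, abs_of_nonneg (by positivity : (0:ℝ) ≤ (Q:ℝ))]
    have hsplit : (Finset.Icc (-K) K).erase 0 = Finset.Icc (-K) (-1) ∪ Finset.Icc 1 K := by
      ext x; simp only [Finset.mem_erase, Finset.mem_Icc, Finset.mem_union]; omega
    have hdisj : Disjoint (Finset.Icc (-K) (-1)) (Finset.Icc (1:ℤ) K) := by
      rw [Finset.disjoint_left]
      intro x hx hx'
      simp only [Finset.mem_Icc] at hx hx'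
      omega
    have hneg : ∑ k ∈ Finset.Icc (-K) (-1), (2 * X / ((Q:ℝ) * |(k:ℝ)|) + 2)
        = ∑ k ∈ Finset.Icc (1:ℤ) K, (2 * X / ((Q:ℝ) * |(k:ℝ)|) + 2) := by
      refine Finset.sum_nbij' (fun k => -k) (fun k => -k) ?_ ?_ ?_ ?_ ?_
      · intro a ha; simp only [Finset.mem_Icc] at ha ⊢; omega
      · intro a ha; simp only [Finset.mem_Icc] at ha ⊢; omega
      · intro a _; omega
      · intro a _; omega
      · intro a _; push_cast; rw [abs_neg]
    have hposum : ∑ k ∈ Finset.Icc (1:ℤ) K, (2 * X / ((Q:ℝ) * |(k:ℝ)|) + 2)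
        ≤ 2 * X / (Q:ℝ) * (1 + Real.log X) + 2 * (X / (Q:ℝ)) := by
      have hrw : ∑ k ∈ Finset.Icc (1:ℤ) K, (2 * X / ((Q:ℝ) * |(k:ℝ)|) + 2)
          = 2 * X / (Q:ℝ) * (∑ k ∈ Finset.Icc (1:ℤ) K, (1:ℝ)/(k:ℝ))
            + 2 * ((Finset.Icc (1:ℤ) K).card : ℝ) := by
        rw [Finset.sum_add_distrib, Finset.sum_const, Finset.mul_sum, nsmul_eq_mul]
        congr 1
        · refine Finset.sum_congr rfl fun k hk => ?_
          simp only [Finset.mem_Icc] at hk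
          have hk0 : (0:ℝ) < (k:ℝ) := by exact_mod_cast hk.1.trans_lt' (by norm_num)
          rw [abs_of_pos hk0]
          field_simp
        · ring
      rw [hrw]
      have hKnat : Finset.Icc (1:ℤ) K = Finset.Icc (1:ℤ) ((K.toNat : ℤ)) := by
        rw [Int.toNat_of_nonneg (by omega)]
      have hharm : ∑ k ∈ Finset.Icc (1:ℤ) K, (1:ℝ)/(k:ℝ) ≤ 1 + Real.log X := by
        rw [hKnat]
        refine le_trans (sum_inv_le_log K.toNat) ?_
        have h1 : ((K.toNat:ℕ):ℝ) ≤ X := by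
          have : ((K.toNat:ℕ):ℝ) = (K:ℝ) := by exact_mod_cast Int.toNat_of_nonneg (by omega : (0:ℤ) ≤ K)
          rw [this]
          calc (K:ℝ) ≤ X / (Q:ℝ) := hKX
            _ ≤ X := by
              rw [div_le_iff₀ hQR]
              have hQ1 : (1:ℝ) ≤ (Q:ℝ) := by exact_mod_cast hQ
              nlinarith
        have h2 : (0:ℝ) < ((K.toNat:ℕ):ℝ) := by
          have h3 : 0 < K.toNat := by omega
          exact_mod_cast h3
        have := Real.log_le_log (by exact_mod_cast h2) h1
        linarith
      have hcardK : ((Finset.Icc (1:ℤ) K).card : ℝ) ≤ X / (Q:ℝ) := by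
        rw [Int.card_Icc]
        have h1 : ((K + 1 - 1).toNat : ℤ) = K := by omega
        have h2 : (((K + 1 - 1).toNat : ℕ) : ℝ) = (K:ℝ) := by exact_mod_cast h1
        rw [h2]; exact hKX
      have hx1 : (0:ℝ) ≤ 2 * X / (Q:ℝ) := by positivity
      nlinarith [hharm, hcardK]
    calc ∑ c ∈ Cset, (2 * X / |(c:ℝ)| + 2)
        ≤ ∑ k ∈ (Finset.Icc (-K) K).erase 0, (2 * X / ((Q:ℝ) * |(k:ℝ)|) + 2) := hstep1
      _ = ∑ k ∈ Finset.Icc (-K) (-1), (2 * X / ((Q:ℝ) * |(k:ℝ)|) + 2)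
          + ∑ k ∈ Finset.Icc (1:ℤ) K, (2 * X / ((Q:ℝ) * |(k:ℝ)|) + 2) := by
          rw [hsplit, Finset.sum_union hdisj]
      _ = 2 * ∑ k ∈ Finset.Icc (1:ℤ) K, (2 * X / ((Q:ℝ) * |(k:ℝ)|) + 2) := by
          rw [hneg]; ring
      _ ≤ 2 * (2 * X / (Q:ℝ) * (1 + Real.log X) + 2 * (X / (Q:ℝ))) := by linarith [hposum]
  -- step 6 : assemble
  have hsplitF := Finset.card_filter_add_card_filter_not
    (s := F) (p := fun p : ℤ×ℤ×ℤ×ℤ => p.2.2.1 = 0)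
  have htotal : (F.card : ℝ) ≤ 6 * X + 3 * X *
      (2 * (2 * X / (Q:ℝ) * (1 + Real.log X) + 2 * (X / (Q:ℝ)))) := by
    have h1 : (F.card : ℝ) = ((F.filter (fun p => p.2.2.1 = 0)).card : ℝ)
        + ((F.filter (fun p => ¬ p.2.2.1 = 0)).card : ℝ) := by
      exact_mod_cast hsplitF.symm
    rw [h1]
    have h2 : ((F.filter (fun p => ¬ p.2.2.1 = 0)).card : ℝ) ≤ (G.card : ℝ) := by
      exact_mod_cast hF1
    have h3 : (0:ℝ) ≤ 3 * X := by linarith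
    have h4 := hGcard.trans (mul_le_mul_of_nonneg_left hsumC h3)
    linarith
  have hfinal : (F.card : ℝ) ≤ (30 + 12/ε) * X ^ (2 + ε) / (Q:ℝ) :=
    htotal.trans (finalNum ε X (Q:ℝ) hε hX (by exact_mod_cast hQ) hQX)
  calc ({p : ℤ × ℤ × ℤ × ℤ |
          p.1 * p.2.2.2 - p.2.1 * p.2.2.1 = 1 ∧ Q ∣ p.2.2.1 ∧
          (|p.1| : ℝ) ≤ X ∧ (|p.2.1| : ℝ) ≤ X ∧ (|p.2.2.1| : ℝ) ≤ X ∧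
          (|p.2.2.2| : ℝ) ≤ X}.ncard : ℝ) ≤ (F.card : ℝ) := by exact_mod_cast hle
    _ ≤ (30 + 12/ε) * X ^ (2 + ε) / (Q:ℝ) := hfinal
end

section
/- Let A₁, A₂ ∈ SL₂(ℤ) both have nonzero lower-left entries and traces of absolute value greater than 2, and suppose (A₁, A₂) is a ping pong pair. Then the subgroup of SL₂(ℤ) generated by A₁ and A₂ is free of rank 2. -/
/-- The disk `D(A)` attached to `A ∈ SL₂(ℤ)`: center `a/c`, radius `1/|c|`. -/
def pingDisk (A : Matrix.SpecialLinearGroup (Fin 2) ℤ) : Set ℂ :=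
  Metric.ball (((A.1 0 0 : ℤ) : ℂ) / ((A.1 1 0 : ℤ) : ℂ)) (1 / |((A.1 1 0 : ℤ) : ℝ)|)

/-- `(A₁, A₂)` is a ping pong pair: the four closed disks are pairwise disjoint. -/
def IsPingPongPair (A₁ A₂ : Matrix.SpecialLinearGroup (Fin 2) ℤ) : Prop :=
  Disjoint (closure (pingDisk A₁)) (closure (pingDisk A₁⁻¹)) ∧
  Disjoint (closure (pingDisk A₁)) (closure (pingDisk A₂)) ∧
  Disjoint (closure (pingDisk A₁)) (closure (pingDisk A₂⁻¹)) ∧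
  Disjoint (closure (pingDisk A₁⁻¹)) (closure (pingDisk A₂)) ∧
  Disjoint (closure (pingDisk A₁⁻¹)) (closure (pingDisk A₂⁻¹)) ∧
  Disjoint (closure (pingDisk A₂)) (closure (pingDisk A₂⁻¹))

open Matrix UpperHalfPlane Metric Set Complex

lemma ping_key (A : Matrix.SpecialLinearGroup (Fin 2) ℤ) (hc : A.1 1 0 ≠ 0) (z : ℍ)
    (hz : (z : ℂ) ∉ closure (pingDisk A⁻¹)) :
    ((A • z : ℍ) : ℂ) ∈ pingDisk A := by
  have hcR : ((A.1 1 0 : ℤ) : ℝ) ≠ 0 := Int.cast_ne_zero.2 hc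
  have hcC : ((A.1 1 0 : ℤ) : ℂ) ≠ 0 := Int.cast_ne_zero.2 hc
  set a : ℂ := ((A.1 0 0 : ℤ) : ℂ) with ha
  set b : ℂ := ((A.1 0 1 : ℤ) : ℂ) with hb
  set c : ℂ := ((A.1 1 0 : ℤ) : ℂ) with hcdef
  set d : ℂ := ((A.1 1 1 : ℤ) : ℂ) with hd
  have hdet : a * d - b * c = 1 := by
    have h := A.2
    rw [Matrix.det_fin_two] at h
    rw [ha, hb, hcdef, hd]
    exact_mod_cast h
  have him : (c * z + d).im = ((A.1 1 0 : ℤ) : ℝ) * z.im := by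
    rw [hcdef, hd]
    simp [Complex.add_im, Complex.mul_im]
  have hden : c * (z : ℂ) + d ≠ 0 := by
    intro h
    rw [h, Complex.zero_im] at him
    exact mul_ne_zero hcR (ne_of_gt z.2) him.symm
  have hsmul : ((A • z : ℍ) : ℂ) = (a * z + b) / (c * z + d) := by
    rw [UpperHalfPlane.specialLinearGroup_apply]
    simp only [UpperHalfPlane.coe_mk, algebraMap_int_eq, eq_intCast, Int.cast_id, ha, hb, hcdef, hd]
    push_cast
    ring_nf
  have hinv00 : (A⁻¹).1 0 0 = A.1 1 1 := by
    rw [Matrix.SpecialLinearGroup.SL2_inv_expl]; rfl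
  have hinv10 : (A⁻¹).1 1 0 = -A.1 1 0 := by
    rw [Matrix.SpecialLinearGroup.SL2_inv_expl]; rfl
  have hz' : 1 / |((A.1 1 0 : ℤ) : ℝ)| < dist (z : ℂ) (d / (-c)) := by
    rw [pingDisk, hinv00, hinv10] at hz
    have hne : (1:ℝ) / |(((-A.1 1 0 : ℤ)) : ℝ)| ≠ 0 :=
      one_div_ne_zero (abs_ne_zero.2 (by exact_mod_cast neg_ne_zero.2 hc))
    rw [closure_ball _ hne, mem_closedBall, not_le] at hz
    have e1 : (((-A.1 1 0 : ℤ)) : ℂ) = -c := by push_cast [hcdef]; ring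
    have e2 : |(((-A.1 1 0 : ℤ)) : ℝ)| = |((A.1 1 0 : ℤ) : ℝ)| := by push_cast; rw [abs_neg]
    rw [e1, e2] at hz
    exact hz
  have habs : ‖c * z + d‖ > 1 := by
    have hzd : (z : ℂ) - d / (-c) = (c * z + d) / c := by
      rw [div_neg]; field_simp; ring
    have hdd : dist (z : ℂ) (d / (-c)) = ‖c * z + d‖ / |((A.1 1 0 : ℤ) : ℝ)| := by
      rw [Complex.dist_eq, hzd, norm_div, hcdef, Complex.norm_intCast]
    rw [hdd, div_lt_div_iff₀ (by positivity) (abs_pos.2 hcR)] at hz'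
    nlinarith [hz', abs_pos.2 hcR]
  have hform : ((A • z : ℍ) : ℂ) - a / c = -(1 / (c * (c * z + d))) := by
    rw [hsmul, div_sub_div _ _ hden hcC]
    rw [show (a * ↑z + b) * c - (c * ↑z + d) * a = -1 by linear_combination -hdet]
    rw [show (c * ↑z + d) * c = c * (c * ↑z + d) by ring]
    rw [neg_div, one_div]
  have ht : 0 < ‖c * z + d‖ := norm_pos_iff.2 hden
  have h1 : (0:ℝ) < |((A.1 1 0 : ℤ) : ℝ)| := abs_pos.2 hcR
  rw [pingDisk, mem_ball, Complex.dist_eq, hform]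
  rw [norm_neg, norm_div, norm_mul, hcdef, Complex.norm_intCast,
    norm_one]
  rw [div_lt_div_iff₀ (mul_pos h1 ht) h1]
  nlinarith [habs, h1, ht]

lemma ping_nonempty (A : Matrix.SpecialLinearGroup (Fin 2) ℤ) (hc : A.1 1 0 ≠ 0) :
    ∃ z : ℍ, (z : ℂ) ∈ closure (pingDisk A) := by
  have hcR : ((A.1 1 0 : ℤ) : ℝ) ≠ 0 := Int.cast_ne_zero.2 hc
  have h1 : (0:ℝ) < |((A.1 1 0 : ℤ) : ℝ)| := abs_pos.2 hcR
  set r : ℝ := 1 / (2 * |((A.1 1 0 : ℤ) : ℝ)|) with hr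
  have hrpos : 0 < r := by positivity
  set w : ℂ := ((((A.1 0 0 : ℤ) : ℝ) / ((A.1 1 0 : ℤ) : ℝ) : ℝ) : ℂ) + r * Complex.I with hw
  have him : w.im = r := by simp [hw]
  refine ⟨⟨w, by rw [him]; exact hrpos⟩, subset_closure ?_⟩
  rw [pingDisk, mem_ball]
  have hsub : w - (((A.1 0 0 : ℤ) : ℂ) / ((A.1 1 0 : ℤ) : ℂ)) = (r : ℂ) * Complex.I := by
    rw [hw]; push_cast; ring
  show dist w _ < _
  rw [Complex.dist_eq, hsub]
  rw [norm_mul, Complex.norm_I, Complex.norm_real, Real.norm_eq_abs, mul_one, abs_of_pos hrpos, hr]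
  rw [div_lt_div_iff₀ (by positivity) h1]
  nlinarith
theorem stmt16' (A₁ A₂ : Matrix.SpecialLinearGroup (Fin 2) ℤ)
    (hc₁ : A₁.1 1 0 ≠ 0) (hc₂ : A₂.1 1 0 ≠ 0)
    (hpp1 : Disjoint (closure (pingDisk A₁)) (closure (pingDisk A₁⁻¹)))
    (hpp2 : Disjoint (closure (pingDisk A₁)) (closure (pingDisk A₂)))
    (hpp3 : Disjoint (closure (pingDisk A₁)) (closure (pingDisk A₂⁻¹)))
    (hpp4 : Disjoint (closure (pingDisk A₁⁻¹)) (closure (pingDisk A₂)))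
    (hpp5 : Disjoint (closure (pingDisk A₁⁻¹)) (closure (pingDisk A₂⁻¹)))
    (hpp6 : Disjoint (closure (pingDisk A₂)) (closure (pingDisk A₂⁻¹))) :
    Function.Injective (FreeGroup.lift ![A₁, A₂] : FreeGroup (Fin 2) →*
      Matrix.SpecialLinearGroup (Fin 2) ℤ) := by
  have hc : ∀ i : Fin 2, (![A₁, A₂] i).1 1 0 ≠ 0 := by
    intro i; fin_cases i <;> simpa
  have hcinv : ∀ i : Fin 2, ((![A₁, A₂] i)⁻¹).1 1 0 ≠ 0 := by
    intro i
    rw [Matrix.SpecialLinearGroup.SL2_inv_expl]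
    show -((![A₁, A₂] i).1 1 0) ≠ 0
    exact neg_ne_zero.2 (hc i)
  apply FreeGroup.injective_lift_of_ping_pong ![A₁, A₂]
    (fun i => UpperHalfPlane.coe ⁻¹' closure (pingDisk (![A₁, A₂] i)))
    (fun i => UpperHalfPlane.coe ⁻¹' closure (pingDisk ((![A₁, A₂] i)⁻¹)))
  · intro i
    obtain ⟨z, hz⟩ := ping_nonempty (![A₁, A₂] i) (hc i)
    exact ⟨z, hz⟩
  · intro i j hij
    fin_cases i <;> fin_cases j <;> simp_all <;>
      [exact hpp2.preimage _; exact hpp2.symm.preimage _]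
  · intro i j hij
    fin_cases i <;> fin_cases j <;> simp_all <;>
      [exact hpp5.preimage _; exact hpp5.symm.preimage _]
  · intro i j
    fin_cases i <;> fin_cases j <;> simp only [Matrix.cons_val_zero, Matrix.cons_val_one,
      Matrix.head_cons]
    · exact hpp1.preimage _
    · exact hpp3.preimage _
    · exact hpp4.symm.preimage _
    · exact hpp6.preimage _
  · rintro i x ⟨w, hw, rfl⟩
    exact subset_closure (ping_key (![A₁, A₂] i) (hc i) w hw)
  · rintro i x ⟨w, hw, rfl⟩
    show (![A₁, A₂] i)⁻¹ • w ∈ _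
    exact subset_closure (ping_key ((![A₁, A₂] i)⁻¹) (hcinv i) w (by rw [inv_inv]; exact hw))

/-- if `A₁, A₂ ∈ SL₂(ℤ)` have nonzero lower-left entries, traces of
absolute value `> 2`, and form a ping pong pair, then the subgroup they generate is
free of rank 2: the natural map from the free group on two generators is injective. -/
theorem stmt16 (A₁ A₂ : Matrix.SpecialLinearGroup (Fin 2) ℤ)
    (hc₁ : A₁.1 1 0 ≠ 0) (hc₂ : A₂.1 1 0 ≠ 0)
    (ht₁ : |A₁.1 0 0 + A₁.1 1 1| > 2) (ht₂ : |A₂.1 0 0 + A₂.1 1 1| > 2)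
    (hpp : IsPingPongPair A₁ A₂) :
    Function.Injective (FreeGroup.lift ![A₁, A₂] : FreeGroup (Fin 2) →*
      Matrix.SpecialLinearGroup (Fin 2) ℤ) := by
  obtain ⟨h1, h2, h3, h4, h5, h6⟩ := hpp
  exact stmt16' A₁ A₂ hc₁ hc₂ h1 h2 h3 h4 h5 h6
end
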